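/- arXiv:2604.28116 — 3 statements merged into one kernel-verified Lean document; each statement's English description precedes it below -/
import Mathlib

section
/- Let M be an ℓ×N matrix over ℚ with entries in {0,1} and rank r ≥ 1. For 1 ≤ d ≤ r let q_d(M) be the least index q such that the first q columns of M span a subspace of ℚ^ℓ of dimension d; the tuple (r; q_1,…,q_r) is called the rank profile of M. Then for every ℓ, N ≥ 1 and every tuple (r; q_1,…,q_r) with 1 ≤ q_1 < ⋯ < q_r ≤ N, the number of ℓ×N matrices with entries in {0,1} whose rank profile equals (r; q_1,…,q_r) is at most 2^{ℓ²} · 2^{rN − Σ_{d=1}^r q_d}. -/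
/-- The dimension (over `ℚ`) of the span of the first `q` columns of the matrix `M`. -/
noncomputable def colSpanDim {l N : ℕ} (M : Matrix (Fin l) (Fin N) ℚ) (q : ℕ) : ℕ :=
  Module.finrank ℚ
    ↥(Submodule.span ℚ {v : Fin l → ℚ | ∃ j : Fin N, (j : ℕ) < q ∧ v = fun i => M i j})

/-! ### Auxiliary definitions and lemmas -/

/-- Span of the first `m` columns. -/
noncomputable def Vmod {l N : ℕ} (M : Matrix (Fin l) (Fin N) ℚ) (m : ℕ) :
    Submodule ℚ (Fin l → ℚ) :=
  Submodule.span ℚ {v : Fin l → ℚ | ∃ j : Fin N, (j : ℕ) < m ∧ v = fun i => M i j}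

lemma colSpanDim_eq_finrank_Vmod {l N : ℕ} (M : Matrix (Fin l) (Fin N) ℚ) (m : ℕ) :
    colSpanDim M m = Module.finrank ℚ (Vmod M m) := rfl

lemma Vmod_mono {l N : ℕ} (M : Matrix (Fin l) (Fin N) ℚ) {a b : ℕ} (h : a ≤ b) :
    Vmod M a ≤ Vmod M b := by
  apply Submodule.span_mono
  rintro v ⟨j, hj, rfl⟩
  exact ⟨j, lt_of_lt_of_le hj h, rfl⟩

lemma colSpanDim_mono {l N : ℕ} (M : Matrix (Fin l) (Fin N) ℚ) {a b : ℕ} (h : a ≤ b) :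
    colSpanDim M a ≤ colSpanDim M b :=
  Submodule.finrank_mono (Vmod_mono M h)

lemma col_mem_Vmod {l N : ℕ} (M : Matrix (Fin l) (Fin N) ℚ) (j : Fin N) :
    (fun i => M i j) ∈ Vmod M ((j : ℕ) + 1) :=
  Submodule.subset_span ⟨j, by omega, rfl⟩

/-- Selection of coordinates determining vectors in a subspace. -/
lemma exists_coords_aux (l : ℕ) : ∀ (n : ℕ) (V : Submodule ℚ (Fin l → ℚ)),
    Module.finrank ℚ V ≤ n → ∃ s : Finset (Fin l), s.card ≤ Module.finrank ℚ V ∧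
      ∀ x ∈ V, (∀ i ∈ s, x i = 0) → x = 0 := by
  intro n
  induction n with
  | zero =>
    intro V hV
    refine ⟨∅, by simp, ?_⟩
    have : V = ⊥ := Submodule.finrank_eq_zero.mp (Nat.le_zero.mp hV)
    intro x hx _
    simpa [this] using hx
  | succ n ih =>
    intro V hV
    by_cases hbot : V = ⊥
    · refine ⟨∅, by simp, ?_⟩
      intro x hx _
      simpa [hbot] using hx
    · obtain ⟨x, hxV, hx0⟩ := Submodule.exists_mem_ne_zero_of_ne_bot hbot
      obtain ⟨i, hi⟩ : ∃ i, x i ≠ 0 := by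
        by_contra h
        push_neg at h
        exact hx0 (funext h)
      set V' : Submodule ℚ (Fin l → ℚ) := V ⊓ LinearMap.ker (LinearMap.proj i) with hV'
      have hlt : V' < V := by
        refine lt_of_le_of_ne inf_le_left ?_
        intro h
        have : x ∈ V' := h ▸ hxV
        exact hi (this.2)
      have hfr : Module.finrank ℚ V' < Module.finrank ℚ V :=
        Submodule.finrank_lt_finrank_of_lt hlt
      obtain ⟨s', hs'c, hs'⟩ := ih V' (by omega)
      refine ⟨insert i s', ?_, ?_⟩
      · calc (insert i s').card ≤ s'.card + 1 := Finset.card_insert_le _ _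
          _ ≤ Module.finrank ℚ V' + 1 := by omega
          _ ≤ Module.finrank ℚ V := by omega
      · intro y hyV hy
        have hyi : y i = 0 := hy i (Finset.mem_insert_self _ _)
        have : y ∈ V' := ⟨hyV, hyi⟩
        exact hs' y this fun j hj => hy j (Finset.mem_insert_of_mem hj)

lemma exists_coords (l : ℕ) (V : Submodule ℚ (Fin l → ℚ)) :
    ∃ s : Finset (Fin l), s.card ≤ Module.finrank ℚ V ∧
      ∀ x ∈ V, (∀ i ∈ s, x i = 0) → x = 0 :=
  exists_coords_aux l _ V le_rfl

noncomputable def sel {l : ℕ} (V : Submodule ℚ (Fin l → ℚ)) : Finset (Fin l) :=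
  (exists_coords l V).choose

lemma sel_card {l : ℕ} (V : Submodule ℚ (Fin l → ℚ)) :
    (sel V).card ≤ Module.finrank ℚ V :=
  (exists_coords l V).choose_spec.1

lemma sel_spec {l : ℕ} (V : Submodule ℚ (Fin l → ℚ)) :
    ∀ x ∈ V, (∀ i ∈ sel V, x i = 0) → x = 0 :=
  (exists_coords l V).choose_spec.2

/-- An injection from boolean functions on a small finset into `Fin (2^n)`. -/
noncomputable def embF {l : ℕ} (s : Finset (Fin l)) (n : ℕ) : (Fin l → Bool) → Fin (2 ^ n) :=
  if h : s.card ≤ n then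
    fun bf =>
      (Nonempty.some (Function.Embedding.nonempty_of_card_le (α := { i // i ∈ s } → Bool)
        (β := Fin (2 ^ n)) (by
          rw [Fintype.card_fun, Fintype.card_coe, Fintype.card_fin, Fintype.card_bool]
          exact Nat.pow_le_pow_right (by norm_num) h)))
        (fun i => bf i.1)
  else fun _ => ⟨0, by positivity⟩

lemma embF_inj {l : ℕ} {s : Finset (Fin l)} {n : ℕ} (h : s.card ≤ n)
    {bf bf' : Fin l → Bool} (hE : embF s n bf = embF s n bf') :
    ∀ i ∈ s, bf i = bf' i := by
  rw [embF, dif_pos h] at hE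
  intro i hi
  have := (Nonempty.some (Function.Embedding.nonempty_of_card_le
      (α := { i // i ∈ s } → Bool) (β := Fin (2 ^ n)) (by
        rw [Fintype.card_fun, Fintype.card_coe, Fintype.card_fin, Fintype.card_bool]
        exact Nat.pow_le_pow_right (by norm_num) h))).injective hE
  exact congrFun this ⟨i, hi⟩

/-- number of pivots with value ≤ s -/
def Dlt {r : ℕ} (q : Fin r → ℕ) (s : ℕ) : ℕ :=
  (Finset.univ.filter fun d : Fin r => q d ≤ s).card

lemma Dlt_le_r {r : ℕ} (q : Fin r → ℕ) (s : ℕ) : Dlt q s ≤ r := by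
  classical
  calc Dlt q s ≤ Finset.univ.card := Finset.card_filter_le _ _
    _ = r := by simp

lemma lt_Dlt_iff {r : ℕ} (q : Fin r → ℕ) (hmono : StrictMono q) (s : ℕ) (d : Fin r) :
    (d : ℕ) < Dlt q s ↔ q d ≤ s := by
  classical
  unfold Dlt
  constructor
  · intro h
    by_contra hqd
    push_neg at hqd
    have hsub : (Finset.univ.filter fun d' : Fin r => q d' ≤ s) ⊆ Finset.Iio d := by
      intro d' hd'
      simp only [Finset.mem_filter] at hd'
      have : q d' < q d := lt_of_le_of_lt hd'.2 hqd
      exact Finset.mem_Iio.mpr (hmono.lt_iff_lt.mp this)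
    have := Finset.card_le_card hsub
    rw [Fin.card_Iio] at this
    omega
  · intro h
    have hsub : Finset.Iic d ⊆ (Finset.univ.filter fun d' : Fin r => q d' ≤ s) := by
      intro d' hd'
      simp only [Finset.mem_filter, Finset.mem_univ, true_and]
      exact le_trans (hmono.monotone (Finset.mem_Iic.mp hd')) h
    have := Finset.card_le_card hsub
    rw [Fin.card_Iic] at this
    omega

lemma sum_Dlt {r N : ℕ} (q : Fin r → ℕ) (hrange : ∀ d, 1 ≤ q d ∧ q d ≤ N) :
    ∑ j : Fin N, Dlt q (j : ℕ) = ∑ d : Fin r, (N - q d) := by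
  classical
  unfold Dlt
  simp only [Finset.card_filter]
  rw [Finset.sum_comm]
  refine Finset.sum_congr rfl fun d _ => ?_
  have h1 : 1 ≤ q d := (hrange d).1
  have h2 : q d ≤ N := (hrange d).2
  have key : (Finset.univ.filter fun j : Fin N => q d ≤ (j : ℕ))
      = (Finset.Iic (⟨q d - 1, by omega⟩ : Fin N))ᶜ := by
    ext j
    simp only [Finset.mem_filter, Finset.mem_univ, true_and, Finset.mem_compl,
      Finset.mem_Iic, Fin.le_def]
    omega
  rw [← Finset.card_filter, key, Finset.card_compl, Fin.card_Iic]
  simp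
  omega

lemma profile_dim {l N r : ℕ} {M : Matrix (Fin l) (Fin N) ℚ} {q : Fin r → ℕ}
    (hmono : StrictMono q)
    (hrank : colSpanDim M N = r)
    (hleast : ∀ d : Fin r, IsLeast {s : ℕ | colSpanDim M s = (d : ℕ) + 1} (q d))
    (s : ℕ) (hs : s ≤ N) : colSpanDim M s = Dlt q s := by
  set k := Dlt q s with hk
  have hkr : k ≤ r := Dlt_le_r q s
  have hub : colSpanDim M s ≤ k := by
    rcases lt_or_eq_of_le hkr with h | h
    · set d : Fin r := ⟨k, h⟩ with hd
      have hqd : ¬ q d ≤ s := by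
        rw [← lt_Dlt_iff q hmono s d]
        simp [hd, hk]
      have h1 : colSpanDim M s ≤ colSpanDim M (q d) :=
        colSpanDim_mono M (by omega)
      have h2 : colSpanDim M (q d) = k + 1 := (hleast d).1
      have h3 : colSpanDim M s ≠ k + 1 := by
        intro hc
        exact hqd ((hleast d).2 hc)
      omega
    · rw [← h] at hrank
      have := colSpanDim_mono M hs
      omega
  have hlb : k ≤ colSpanDim M s := by
    rcases Nat.eq_zero_or_pos k with h | h
    · omega
    · set d : Fin r := ⟨k - 1, by omega⟩ with hd
      have hqd : q d ≤ s := by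
        rw [← lt_Dlt_iff q hmono s d]
        simp only [hd, ← hk]
        omega
      have h2 : colSpanDim M (q d) = (k - 1) + 1 := (hleast d).1
      have := colSpanDim_mono M hqd
      omega
  omega

/-- Exponent budget for column `j`. -/
def eFun {r : ℕ} (q : Fin r → ℕ) (N : ℕ) (j : Fin N) : ℕ :=
  if ∃ d : Fin r, q d = (j : ℕ) + 1 then 0 else Dlt q (j : ℕ)

/-- The encoding of a matrix. -/
noncomputable def encode {l N r : ℕ} (q : Fin r → ℕ) (M : Matrix (Fin l) (Fin N) ℚ) :
    Matrix (Fin l) (Fin r) Bool × (∀ j : Fin N, Fin (2 ^ eFun q N j)) :=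
  (Matrix.of fun i d => if h : q d - 1 < N then decide (M i ⟨q d - 1, h⟩ = 1) else false,
   fun j => embF (if ∃ d : Fin r, q d = (j : ℕ) + 1 then ∅ else sel (Vmod M (j : ℕ)))
     (eFun q N j) (fun i => decide (M i j = 1)))

lemma eq_of_decide_eq {a b : ℚ} (ha : a = 0 ∨ a = 1) (hb : b = 0 ∨ b = 1)
    (h : decide (a = 1) = decide (b = 1)) : a = b := by
  have hiff : (a = 1) ↔ (b = 1) := by simpa [decide_eq_decide] using h
  rcases ha with h0 | h0 <;> rcases hb with h1 | h1 <;> subst h0 <;> subst h1 <;>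
    first | rfl | (exfalso; revert hiff; norm_num)

theorem statement_15 (l N r : ℕ) (hl : 1 ≤ l) (hN : 1 ≤ N) (hr : 1 ≤ r)
    (q : Fin r → ℕ) (hmono : StrictMono q) (hrange : ∀ d, 1 ≤ q d ∧ q d ≤ N) :
    (Nat.card {M : Matrix (Fin l) (Fin N) ℚ //
        (∀ i j, M i j = 0 ∨ M i j = 1) ∧
        colSpanDim M N = r ∧
        ∀ d : Fin r, IsLeast {s : ℕ | colSpanDim M s = (d : ℕ) + 1} (q d)} : ℝ) ≤
      2 ^ (l ^ 2) * (2 : ℝ) ^ (((r : ℝ) * (N : ℝ)) - ∑ d, (q d : ℝ)) := by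
  classical
  set S := {M : Matrix (Fin l) (Fin N) ℚ //
        (∀ i j, M i j = 0 ∨ M i j = 1) ∧
        colSpanDim M N = r ∧
        ∀ d : Fin r, IsLeast {s : ℕ | colSpanDim M s = (d : ℕ) + 1} (q d)} with hS
  have hq_sum_le : ∑ d : Fin r, q d ≤ r * N := by
    calc ∑ d : Fin r, q d ≤ ∑ _d : Fin r, N := Finset.sum_le_sum fun d _ => (hrange d).2
      _ = r * N := by simp [Finset.sum_const, mul_comm]
  -- rewrite the RHS
  have hRHS : (2 : ℝ) ^ (l ^ 2) * (2 : ℝ) ^ (((r : ℝ) * (N : ℝ)) - ∑ d, (q d : ℝ))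
      = ((2 ^ (l ^ 2) * 2 ^ (r * N - ∑ d, q d) : ℕ) : ℝ) := by
    have h1 : ((r : ℝ) * (N : ℝ)) - ∑ d, (q d : ℝ) = ((r * N - ∑ d, q d : ℕ) : ℝ) := by
      push_cast [Nat.cast_sub hq_sum_le]
      ring
    rw [h1, Real.rpow_natCast]
    push_cast
    ring
  rcases isEmpty_or_nonempty S with hE | hNE
  · simp only [Nat.card_of_isEmpty, Nat.cast_zero]
    positivity
  -- r ≤ l
  have hrl : r ≤ l := by
    obtain ⟨⟨M, hM01, hMr, hMl⟩⟩ := hNE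
    rw [colSpanDim_eq_finrank_Vmod] at hMr
    calc r = Module.finrank ℚ (Vmod M N) := hMr.symm
      _ ≤ Module.finrank ℚ (Fin l → ℚ) := Submodule.finrank_le _
      _ = l := by simp
  -- injectivity of the encoding
  have hinj : Function.Injective (fun x : S => encode q x.1) := by
    rintro ⟨M, h01, hrank, hleast⟩ ⟨M', h01', hrank', hleast'⟩ hE
    simp only [encode, Prod.mk.injEq] at hE
    obtain ⟨hE1, hE2⟩ := hE
    have key : ∀ n : ℕ, ∀ j : Fin N, (j : ℕ) = n → ∀ i, M i j = M' i j := by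
      intro n
      induction n using Nat.strong_induction_on with
      | _ n ih =>
        intro j hjn i
        by_cases hp : ∃ d : Fin r, q d = (j : ℕ) + 1
        · obtain ⟨d, hd⟩ := hp
          have hlt : q d - 1 < N := by have := (hrange d); omega
          have hthis := congrFun (congrFun hE1 i) d
          simp only [Matrix.of_apply] at hthis
          rw [dif_pos hlt, dif_pos hlt] at hthis
          have hjq : (⟨q d - 1, hlt⟩ : Fin N) = j := by
            apply Fin.ext; simp; omega
          rw [hjq] at hthis
          exact eq_of_decide_eq (h01 i j) (h01' i j) hthis
        · -- non-pivot column
          have hcols_eq : ∀ j' : Fin N, (j' : ℕ) < (j : ℕ) →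
              (fun i => M i j') = (fun i => M' i j') := by
            intro j' hj'
            funext i'
            exact ih (j' : ℕ) (by omega) j' rfl i'
          have hVeq : Vmod M (j : ℕ) = Vmod M' (j : ℕ) := by
            unfold Vmod
            congr 1
            ext v
            constructor
            · rintro ⟨j', hj', rfl⟩
              exact ⟨j', hj', by rw [hcols_eq j' hj']⟩
            · rintro ⟨j', hj', rfl⟩
              exact ⟨j', hj', by rw [hcols_eq j' hj']⟩
          have hDeq : Dlt q (j : ℕ) = Dlt q ((j : ℕ) + 1) := by
            unfold Dlt
            congr 1
            apply Finset.filter_congr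
            intro d _
            have hne : q d ≠ (j : ℕ) + 1 := fun hc => hp ⟨d, hc⟩
            constructor <;> intro h <;> omega
          have hmemM : (fun i => M i j) ∈ Vmod M (j : ℕ) := by
            have h1 : colSpanDim M (j : ℕ) = colSpanDim M ((j : ℕ) + 1) := by
              rw [profile_dim hmono hrank hleast _ (by omega),
                profile_dim hmono hrank hleast _ (by omega), hDeq]
            have h2 : Vmod M (j : ℕ) = Vmod M ((j : ℕ) + 1) :=
              Submodule.eq_of_le_of_finrank_eq (Vmod_mono M (by omega)) h1
            rw [h2]
            exact col_mem_Vmod M j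
          have hmemM' : (fun i => M' i j) ∈ Vmod M (j : ℕ) := by
            rw [hVeq]
            have h1 : colSpanDim M' (j : ℕ) = colSpanDim M' ((j : ℕ) + 1) := by
              rw [profile_dim hmono hrank' hleast' _ (by omega),
                profile_dim hmono hrank' hleast' _ (by omega), hDeq]
            have h2 : Vmod M' (j : ℕ) = Vmod M' ((j : ℕ) + 1) :=
              Submodule.eq_of_le_of_finrank_eq (Vmod_mono M' (by omega)) h1
            rw [h2]
            exact col_mem_Vmod M' j
          have hEj := congrFun hE2 j
          rw [if_neg hp, if_neg hp, hVeq] at hEj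
          have hcard : (sel (Vmod M' (j : ℕ))).card ≤ eFun q N j := by
            unfold eFun
            rw [if_neg hp]
            calc (sel (Vmod M' (j : ℕ))).card ≤ Module.finrank ℚ (Vmod M' (j : ℕ)) :=
                sel_card _
              _ = colSpanDim M' (j : ℕ) := rfl
              _ = Dlt q (j : ℕ) := profile_dim hmono hrank' hleast' _ (by omega)
          have hbits := embF_inj hcard hEj
          have hdiff : (fun i => M i j) - (fun i => M' i j) = 0 := by
            apply sel_spec (Vmod M' (j : ℕ))
            · rw [← hVeq]
              exact Submodule.sub_mem _ hmemM (hVeq ▸ hmemM')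
            · intro i' hi'
              have hb := hbits i' hi'
              have heqi : M i' j = M' i' j := eq_of_decide_eq (h01 i' j) (h01' i' j) hb
              show M i' j - M' i' j = 0
              rw [heqi, sub_self]
          have := congrFun hdiff i
          simpa [sub_eq_zero] using this
    apply Subtype.ext
    funext i j
    exact key (j : ℕ) j rfl i
  -- sums
  have hsum_e : ∑ j : Fin N, eFun q N j ≤ r * N - ∑ d, q d := by
    have h1 : ∑ j : Fin N, eFun q N j ≤ ∑ j : Fin N, Dlt q (j : ℕ) := by
      apply Finset.sum_le_sum
      intro j _
      unfold eFun
      split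
      · exact Nat.zero_le _
      · exact le_rfl
    have h2 : ∑ d : Fin r, (N - q d) = r * N - ∑ d, q d := by
      apply Nat.eq_sub_of_add_eq
      rw [← Finset.sum_add_distrib]
      have : ∀ d : Fin r, N - q d + q d = N := fun d => by have := (hrange d).2; omega
      rw [Finset.sum_congr rfl fun d _ => this d]
      simp [Finset.sum_const, mul_comm]
    rw [sum_Dlt q hrange] at h1
    omega
  -- cardinality bound
  have hcard1 : Nat.card S ≤ 2 ^ (l ^ 2) * 2 ^ (r * N - ∑ d, q d) := by
    have hle := Nat.card_le_card_of_injective _ hinj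
    rw [Nat.card_eq_fintype_card
      (α := Matrix (Fin l) (Fin r) Bool × (∀ j : Fin N, Fin (2 ^ eFun q N j)))] at hle
    refine le_trans hle ?_
    rw [Fintype.card_prod, Fintype.card_pi]
    have hM : Fintype.card (Matrix (Fin l) (Fin r) Bool) = 2 ^ (l * r) := by
      rw [show Fintype.card (Matrix (Fin l) (Fin r) Bool)
        = Fintype.card (Fin l → Fin r → Bool) from rfl]
      simp [Fintype.card_fun]
      rw [← pow_mul, mul_comm]
    have hP : ∏ j : Fin N, Fintype.card (Fin (2 ^ eFun q N j))
        = 2 ^ (∑ j : Fin N, eFun q N j) := by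
      simp only [Fintype.card_fin]
      exact Finset.prod_pow_eq_pow_sum _ _ _
    rw [hM, hP]
    have e1 : 2 ^ (l * r) ≤ 2 ^ (l ^ 2) := by
      apply Nat.pow_le_pow_right (by norm_num)
      calc l * r ≤ l * l := Nat.mul_le_mul_left l hrl
        _ = l ^ 2 := (sq l).symm
    have e2 : 2 ^ (∑ j : Fin N, eFun q N j) ≤ 2 ^ (r * N - ∑ d, q d) :=
      Nat.pow_le_pow_right (by norm_num) hsum_e
    exact Nat.mul_le_mul e1 e2
  calc (Nat.card S : ℝ) ≤ ((2 ^ (l ^ 2) * 2 ^ (r * N - ∑ d, q d) : ℕ) : ℝ) := by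
        exact_mod_cast hcard1
    _ = 2 ^ (l ^ 2) * (2 : ℝ) ^ (((r : ℝ) * (N : ℝ)) - ∑ d, (q d : ℝ)) := hRHS.symm
end

section
/- There is an absolute constant C such that for all integers ℓ ≥ 1 and N ≥ 10ℓ, and all integers r with 1 ≤ r < ℓ, the number of ℓ×N matrices M over ℚ with entries in {0,1}, of rank r, and possessing at least r+1 pairwise distinct nonzero rows (distinct as vectors of ℚ^N), is at most C · 2^{ℓ²} · 2^{(r − 1/10)·N}. -/
namespace S16

open Finset Submodule Set Function Module

noncomputable section

/-- interpret a boolean as a rational 0 or 1 -/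
def bit (b : Bool) : ℚ := if b then 1 else 0

lemma bit_mem (b : Bool) : bit b = 0 ∨ bit b = 1 := by
  cases b <;> simp [bit]

lemma bit_decide {q : ℚ} (h : q = 0 ∨ q = 1) : bit (decide (q = 1)) = q := by
  rcases h with h | h <;> simp [h, bit]

open Classical in
/-- a canonical nonzero kernel element of a boolean square matrix (or `0`). -/
def muOf {m : ℕ} (A : Matrix (Fin m) (Fin m) Bool) : Fin m → ℚ :=
  if h : ∃ μ : Fin m → ℚ, (∀ i, ∑ j, bit (A i j) * μ j = 0) ∧ μ ≠ 0 then h.choose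
  else 0

/-- `A` is good if its canonical kernel element has at least three nonzero entries. -/
def Good {m : ℕ} (A : Matrix (Fin m) (Fin m) Bool) : Prop :=
  ∃ a b c : Fin m, a ≠ b ∧ a ≠ c ∧ b ≠ c ∧ muOf A a ≠ 0 ∧ muOf A b ≠ 0 ∧ muOf A c ≠ 0

/-- no four boolean solutions of a 3-variable affine equation with nonzero coefficients -/
lemma no_four (a b c d : ℚ) (ha : a ≠ 0) (hb : b ≠ 0) (hc : c ≠ 0)
    (h : ∀ y z : Bool, ∃ x : Bool, a * bit x + b * bit y + c * bit z = d) : False := by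
  obtain ⟨x00, e00⟩ := h false false
  obtain ⟨x10, e10⟩ := h true false
  obtain ⟨x01, e01⟩ := h false true
  obtain ⟨x11, e11⟩ := h true true
  cases x00 <;> cases x10 <;> cases x01 <;> cases x11 <;>
    simp [bit] at e00 e10 e01 e11 <;>
    first
      | exact ha (by linarith)
      | exact hb (by linarith)
      | exact hc (by linarith)

lemma card_triple (a b c d : ℚ) (ha : a ≠ 0) (hb : b ≠ 0) (hc : c ≠ 0) :
    (Finset.univ.filter
      (fun t : Bool × Bool × Bool => a * bit t.1 + b * bit t.2.1 + c * bit t.2.2 = d)).card ≤ 3 := by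
  classical
  set S := (Finset.univ.filter
      (fun t : Bool × Bool × Bool => a * bit t.1 + b * bit t.2.1 + c * bit t.2.2 = d)) with hS
  have hfib : S.card = ∑ yz : Bool × Bool, (S.filter (fun t => t.2 = yz)).card :=
    Finset.card_eq_sum_card_fiberwise (fun x _ => Finset.mem_univ x.2)
  -- each fiber has at most one element
  have hone : ∀ yz : Bool × Bool, (S.filter (fun t => t.2 = yz)).card ≤ 1 := by
    intro yz
    refine Finset.card_le_one.2 ?_
    intro t ht t' ht'
    simp only [Finset.mem_filter, hS, Finset.mem_univ, true_and] at ht ht'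
    obtain ⟨he, h2⟩ := ht; obtain ⟨he', h2'⟩ := ht'
    have hx : t.1 = t'.1 := by
      by_contra hne
      rw [h2'] at he'
      rw [h2] at he
      cases ht1 : t.1 <;> cases ht1' : t'.1 <;> rw [ht1] at he hne <;> rw [ht1'] at he' hne
      · exact hne rfl
      · exact ha (by simp [bit] at he he'; linarith)
      · exact ha (by simp [bit] at he he'; linarith)
      · exact hne rfl
    exact Prod.ext hx (h2.trans h2'.symm)
  -- some fiber is empty
  have hempty : ∃ yz : Bool × Bool, (S.filter (fun t => t.2 = yz)).card = 0 := by
    by_contra hno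
    push_neg at hno
    apply no_four a b c d ha hb hc
    intro y z
    have := hno (y, z)
    obtain ⟨t, htm⟩ := Finset.card_pos.1 (Nat.pos_of_ne_zero this)
    simp only [Finset.mem_filter, hS, Finset.mem_univ, true_and] at htm
    refine ⟨t.1, ?_⟩
    have : t.2.1 = y ∧ t.2.2 = z := by
      constructor <;> rw [htm.2]
    rw [← this.1, ← this.2]
    exact htm.1
  obtain ⟨yz0, hyz0⟩ := hempty
  rw [hfib, ← Finset.sum_erase_add _ _ (Finset.mem_univ yz0), hyz0, add_zero]
  calc ∑ yz ∈ Finset.univ.erase yz0, (S.filter (fun t => t.2 = yz)).card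
      ≤ ∑ yz ∈ Finset.univ.erase yz0, 1 := Finset.sum_le_sum (fun i _ => hone i)
    _ = (Finset.univ.erase yz0).card := by simp
    _ ≤ 3 := by
        rw [Finset.card_erase_of_mem (Finset.mem_univ yz0)]
        simp


lemma card_sol_le {m : ℕ} (μ : Fin m → ℚ) (a b c : Fin m)
    (hab : a ≠ b) (hac : a ≠ c) (hbc : b ≠ c)
    (ha : μ a ≠ 0) (hb : μ b ≠ 0) (hc : μ c ≠ 0) :
    Nat.card {x : Fin m → Bool // ∑ i, μ i * bit (x i) = 0} ≤ 3 * 2 ^ (m - 3) := by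
  classical
  rw [Nat.card_eq_fintype_card, Fintype.card_subtype]
  set E : Finset (Fin m) := {a, b, c} with hE
  have hEcard : E.card = 3 := by
    rw [hE, Finset.card_insert_of_notMem (by simp [hab, hac]),
      Finset.card_insert_of_notMem (by simp [hbc]), Finset.card_singleton]
  set s := Finset.univ.filter (fun x : Fin m → Bool => ∑ i, μ i * bit (x i) = 0) with hs
  set f : (Fin m → Bool) → ({i : Fin m // i ∉ E} → Bool) := fun x => fun i => x i.1 with hf
  have key : ∀ g ∈ s.image f, (s.filter (fun x => f x = g)).card ≤ 3 := by
    intro g _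
    -- inject the fiber into the triple solution set
    set d : ℚ := ∑ i ∈ Eᶜ.attach, μ i.1 * bit (g ⟨i.1, Finset.mem_compl.1 i.2⟩) with hd
    have hsum : ∀ x ∈ s.filter (fun x => f x = g),
        μ a * bit (x a) + μ b * bit (x b) + μ c * bit (x c) = -d := by
      intro x hx
      simp only [Finset.mem_filter, hs, Finset.mem_univ, true_and] at hx
      obtain ⟨hx0, hxg⟩ := hx
      have hsplit : (∑ i ∈ E, μ i * bit (x i)) + ∑ i ∈ Eᶜ, μ i * bit (x i) = 0 := by
        rw [Finset.sum_add_sum_compl]; exact hx0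
      have hE3 : ∑ i ∈ E, μ i * bit (x i)
          = μ a * bit (x a) + μ b * bit (x b) + μ c * bit (x c) := by
        rw [hE, Finset.sum_insert (by simp [hab, hac]),
          Finset.sum_insert (by simp [hbc]), Finset.sum_singleton, add_assoc]
      have hcompl : ∑ i ∈ Eᶜ, μ i * bit (x i) = d := by
        rw [hd, ← Finset.sum_attach Eᶜ (fun i => μ i * bit (x i))]
        refine Finset.sum_congr rfl (fun i _ => ?_)
        have : f x ⟨i.1, Finset.mem_compl.1 i.2⟩ = g ⟨i.1, Finset.mem_compl.1 i.2⟩ :=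
          congrFun hxg _
        simp only [hf] at this
        rw [← this]
      rw [hE3, hcompl] at hsplit
      linarith
    have hinj : Set.InjOn (fun x : Fin m → Bool => ((x a, x b, x c) : Bool × Bool × Bool))
        (s.filter (fun x => f x = g)) := by
      intro x hx y hy hxy
      simp only [Finset.coe_filter, Set.mem_setOf_eq] at hx hy
      funext i
      by_cases hiE : i ∈ E
      · rw [hE] at hiE
        simp only [Finset.mem_insert, Finset.mem_singleton] at hiE
        have h1 : x a = y a := congrArg Prod.fst hxy
        have h2 : x b = y b := congrArg (fun t => t.2.1) hxy
        have h3 : x c = y c := congrArg (fun t => t.2.2) hxy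
        rcases hiE with rfl | rfl | rfl
        · exact h1
        · exact h2
        · exact h3
      · have : f x = f y := hx.2.trans hy.2.symm
        exact congrFun this ⟨i, hiE⟩
    have hmaps : ∀ x ∈ s.filter (fun x => f x = g),
        ((x a, x b, x c) : Bool × Bool × Bool) ∈ (Finset.univ.filter
          (fun t : Bool × Bool × Bool =>
            μ a * bit t.1 + μ b * bit t.2.1 + μ c * bit t.2.2 = -d)) := by
      intro x hx
      simp only [Finset.mem_filter, Finset.mem_univ, true_and]
      exact hsum x hx
    calc (s.filter (fun x => f x = g)).card
        ≤ (Finset.univ.filter (fun t : Bool × Bool × Bool =>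
            μ a * bit t.1 + μ b * bit t.2.1 + μ c * bit t.2.2 = -d)).card :=
          Finset.card_le_card_of_injOn _ hmaps hinj
      _ ≤ 3 := card_triple _ _ _ _ ha hb hc
  calc s.card ≤ 3 * (s.image f).card := Finset.card_le_mul_card_image s 3 key
    _ ≤ 3 * Fintype.card ({i : Fin m // i ∉ E} → Bool) := by
        gcongr
        exact (Finset.card_le_univ _).trans (le_of_eq (Finset.card_univ))
    _ ≤ 3 * 2 ^ (m - 3) := by
        have hcc : Fintype.card {i : Fin m // i ∉ E} = m - 3 := by
          have h1 := Fintype.card_subtype_compl (p := fun i : Fin m => i ∈ E)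
          have h2 : Fintype.card {i : Fin m // i ∈ E} = 3 := by
            rw [show Fintype.card {i : Fin m // i ∈ E} = E.card from Fintype.card_coe E]
            exact hEcard
          simp only [h2, Fintype.card_fin] at h1
          exact h1
        rw [Fintype.card_fun, Fintype.card_bool, hcc]


lemma exists_three_support {m N : ℕ} (u : Fin m → Fin N → ℚ)
    (hinj : Function.Injective u) (hne : ∀ i, u i ≠ 0)
    (h01 : ∀ i j, u i j = 0 ∨ u i j = 1)
    (μ : Fin m → ℚ) (hμ : μ ≠ 0) (hdep : ∀ j, ∑ i, μ i * u i j = 0) :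
    ∃ a b c, a ≠ b ∧ a ≠ c ∧ b ≠ c ∧ μ a ≠ 0 ∧ μ b ≠ 0 ∧ μ c ≠ 0 := by
  classical
  obtain ⟨a, ha⟩ := Function.ne_iff.1 hμ
  simp only [Pi.zero_apply] at ha
  -- second support element
  have hb' : ∃ b, b ≠ a ∧ μ b ≠ 0 := by
    by_contra hno
    push_neg at hno
    have hzero : ∀ i, i ≠ a → μ i = 0 := fun i hi => hno i hi
    have : ∀ j, μ a * u a j = 0 := by
      intro j
      have := hdep j
      rwa [Finset.sum_eq_single a (fun i _ hi => by rw [hzero i hi, zero_mul])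
        (fun h => absurd (Finset.mem_univ a) h)] at this
    exact hne a (funext fun j => by
      have := this j
      rcases mul_eq_zero.1 this with h | h
      · exact absurd h ha
      · exact h)
  obtain ⟨b, hba, hb⟩ := hb'
  -- third support element
  have hc' : ∃ c, c ≠ a ∧ c ≠ b ∧ μ c ≠ 0 := by
    by_contra hno
    push_neg at hno
    have hzero : ∀ i, i ≠ a → i ≠ b → μ i = 0 := fun i h1 h2 => hno i h1 h2
    have hdep2 : ∀ j, μ a * u a j + μ b * u b j = 0 := by
      intro j
      have h := hdep j
      rw [← Finset.sum_subset (Finset.subset_univ ({a, b} : Finset (Fin m)))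
        (fun i _ hi => by
          simp only [Finset.mem_insert, Finset.mem_singleton, not_or] at hi
          rw [hzero i hi.1 hi.2, zero_mul])] at h
      rwa [Finset.sum_insert (by simp [hba.symm]), Finset.sum_singleton] at h
    -- find a coordinate where u a is 1
    obtain ⟨j0, hj0⟩ := Function.ne_iff.1 (hne a)
    simp only [Pi.zero_apply] at hj0
    have hua1 : u a j0 = 1 := (h01 a j0).resolve_left hj0
    have hmab : μ a + μ b = 0 := by
      have := hdep2 j0
      rw [hua1, mul_one] at this
      rcases h01 b j0 with h | h
      · rw [h, mul_zero, add_zero] at this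
        exact absurd this ha
      · rw [h, mul_one] at this
        exact this
    have huab : u a = u b := by
      funext j
      have h := hdep2 j
      have : μ a * (u a j - u b j) = 0 := by linear_combination h - u b j * hmab
      rcases mul_eq_zero.1 this with h' | h'
      · exact absurd h' ha
      · linarith
    exact hba (hinj huab).symm
  obtain ⟨c, hca, hcb, hc⟩ := hc'
  exact ⟨a, b, c, fun h => hba h.symm, fun h => hca h.symm, fun h => hcb h.symm, ha, hb, hc⟩


lemma exists_boolmat {m N : ℕ} (u : Fin m → Fin N → ℚ)
    (h01 : ∀ i j, u i j = 0 ∨ u i j = 1)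
    (μ0 : Fin m → ℚ) (hμ0 : μ0 ≠ 0) (hdep : ∀ j, ∑ i, μ0 i * u i j = 0) :
    ∃ A : Matrix (Fin m) (Fin m) Bool,
      muOf A ≠ 0 ∧ ∀ j, ∑ i, muOf A i * u i j = 0 := by
  classical
  set R : Set (Fin m → ℚ) := Set.range (fun j : Fin N => fun i => u i j) with hR
  obtain ⟨s, hsR, hspan, hind⟩ := exists_linearIndependent ℚ R
  have hfin : s.Finite := hind.setFinite
  haveI := hfin.fintype
  set t := s.toFinset with ht
  have hcard : t.card ≤ m := by
    have h1 : finrank ℚ (span ℚ s) = t.card := finrank_span_set_eq_card hind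
    have h2 : finrank ℚ (span ℚ s) ≤ finrank ℚ (Fin m → ℚ) := (span ℚ s).finrank_le
    rw [h1] at h2
    simpa using h2
  set L := t.toList with hL
  have hlen : L.length ≤ m := by rw [hL, Finset.length_toList]; exact hcard
  set e : Fin m → (Fin m → ℚ) := fun k =>
    if h : (k : ℕ) < L.length then L.get ⟨k, h⟩ else 0 with he
  have he1 : ∀ v ∈ s, ∃ k : Fin m, e k = v := by
    intro v hv
    have hvL : v ∈ L := by rw [hL, Finset.mem_toList, ht, Set.mem_toFinset]; exact hv
    obtain ⟨n, hn⟩ := List.mem_iff_get.1 hvL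
    refine ⟨⟨n.1, lt_of_lt_of_le n.2 hlen⟩, ?_⟩
    rw [he]
    simp only [dif_pos n.2]
    rw [← hn]
  have he2 : ∀ k, e k ∈ s ∨ e k = 0 := by
    intro k
    rw [he]
    simp only []
    split_ifs with h
    · left
      exact Set.mem_toFinset.mp (Finset.mem_toList.mp (List.get_mem L ⟨k, h⟩))
    · right; rfl
  have hs01 : ∀ v ∈ s, ∀ i, v i = 0 ∨ v i = 1 := by
    intro v hv i
    obtain ⟨j, hj⟩ := hsR hv
    rw [← hj]
    exact h01 i j
  have he01 : ∀ k i, e k i = 0 ∨ e k i = 1 := by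
    intro k i
    rcases he2 k with h | h
    · exact hs01 _ h i
    · left; rw [h]; rfl
  set A : Matrix (Fin m) (Fin m) Bool := Matrix.of (fun k i => decide (e k i = 1)) with hA
  have hbitA : ∀ k i, bit (A k i) = e k i := fun k i => bit_decide (he01 k i)
  -- the linear functional associated to μ
  set lf : (Fin m → ℚ) → ((Fin m → ℚ) →ₗ[ℚ] ℚ) :=
    fun μ => ∑ i, μ i • LinearMap.proj i with hlf
  have hlfap : ∀ μ v, lf μ v = ∑ i, μ i * v i := by
    intro μ v
    rw [hlf]
    simp [LinearMap.sum_apply, LinearMap.smul_apply, LinearMap.proj_apply, smul_eq_mul]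
  have key : ∀ μ : Fin m → ℚ,
      (∀ k, ∑ i, bit (A k i) * μ i = 0) ↔ (∀ j, ∑ i, μ i * u i j = 0) := by
    intro μ
    have hAe : ∀ k, (∑ i, bit (A k i) * μ i) = lf μ (e k) := by
      intro k
      rw [hlfap]
      exact Finset.sum_congr rfl (fun i _ => by rw [hbitA, mul_comm])
    have hcol : ∀ j, (∑ i, μ i * u i j) = lf μ (fun i => u i j) := fun j => (hlfap _ _).symm
    constructor
    · intro h j
      rw [hcol]
      have hss : s ⊆ (LinearMap.ker (lf μ) : Set (Fin m → ℚ)) := by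
        intro v hv
        obtain ⟨k, hk⟩ := he1 v hv
        have := h k
        rw [hAe k, hk] at this
        exact this
      have hsp : span ℚ R ≤ LinearMap.ker (lf μ) := by
        rw [← hspan]
        exact span_le.2 hss
      have : (fun i => u i j) ∈ span ℚ R := subset_span ⟨j, rfl⟩
      exact hsp this
    · intro h k
      rw [hAe]
      rcases he2 k with hk | hk
      · obtain ⟨j, hj⟩ := hsR hk
        rw [← hj, ← hcol]
        exact h j
      · rw [hk, map_zero]
  have hex : ∃ μ : Fin m → ℚ, (∀ k, ∑ i, bit (A k i) * μ i = 0) ∧ μ ≠ 0 :=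
    ⟨μ0, (key μ0).2 hdep, hμ0⟩
  have hmu : muOf A = hex.choose := by
    rw [muOf, dif_pos hex]
  refine ⟨A, ?_, ?_⟩
  · rw [hmu]; exact hex.choose_spec.2
  · rw [hmu]
    exact (key _).1 hex.choose_spec.1


lemma exists_proj {N r : ℕ} (v : Fin r → Fin N → ℚ) :
    ∃ J : Finset (Fin N), J.card ≤ r ∧
      ∀ x ∈ span ℚ (Set.range v), (∀ j ∈ J, x j = 0) → x = 0 := by
  classical
  rcases Nat.eq_zero_or_pos N with hN | hN
  · refine ⟨∅, by simp, ?_⟩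
    intro x _ _
    funext j
    exact absurd (j.2.trans_le hN.le) (Nat.not_lt_zero _)
  -- columns
  set col : Fin N → (Fin r → ℚ) := fun j => fun k => v k j with hcol
  obtain ⟨s, hsC, hspan, hind⟩ := exists_linearIndependent ℚ (Set.range col)
  have hfin : s.Finite := hind.setFinite
  haveI := hfin.fintype
  have hcard : s.toFinset.card ≤ r := by
    have h1 : finrank ℚ (span ℚ s) = s.toFinset.card := finrank_span_set_eq_card hind
    have h2 : finrank ℚ (span ℚ s) ≤ finrank ℚ (Fin r → ℚ) := (span ℚ s).finrank_le
    rw [h1] at h2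
    simpa using h2
  set pk : (Fin r → ℚ) → Fin N := fun w =>
    if h : ∃ j, col j = w then h.choose else ⟨0, hN⟩ with hpk
  have hpk1 : ∀ w ∈ s, col (pk w) = w := by
    intro w hw
    obtain ⟨j, hj⟩ := hsC hw
    rw [hpk]
    simp only []
    rw [dif_pos ⟨j, hj⟩]
    exact (⟨j, hj⟩ : ∃ j, col j = w).choose_spec
  refine ⟨s.toFinset.image pk, (Finset.card_image_le).trans hcard, ?_⟩
  intro x hx hx0
  obtain ⟨c, hc⟩ := (mem_span_range_iff_exists_fun ℚ).1 hx
  set F : (Fin r → ℚ) →ₗ[ℚ] ℚ := ∑ k, c k • LinearMap.proj k with hF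
  have hFap : ∀ w, F w = ∑ k, c k * w k := by
    intro w
    rw [hF]
    simp [LinearMap.sum_apply, LinearMap.smul_apply, LinearMap.proj_apply, smul_eq_mul]
  have hxj : ∀ j, x j = F (col j) := by
    intro j
    rw [hFap, ← hc]
    simp [hcol, Finset.sum_apply, Pi.smul_apply, smul_eq_mul]
  have hss : s ⊆ (LinearMap.ker F : Set (Fin r → ℚ)) := by
    intro w hw
    have hmem : pk w ∈ s.toFinset.image pk :=
      Finset.mem_image_of_mem pk (Set.mem_toFinset.2 hw)
    have := hx0 _ hmem
    rw [hxj (pk w), hpk1 w hw] at this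
    exact this
  have hsp : span ℚ (Set.range col) ≤ LinearMap.ker F := by
    rw [← hspan]
    exact span_le.2 hss
  funext j
  have : F (col j) = 0 := hsp (subset_span ⟨j, rfl⟩)
  rw [Pi.zero_apply, hxj j, this]


lemma exists_enc {N r : ℕ} (v : Fin r → Fin N → ℚ) :
    ∃ f : (Fin N → ℚ) → (Fin r → Bool),
      Set.InjOn f {w | w ∈ span ℚ (Set.range v) ∧ ∀ j, w j = 0 ∨ w j = 1} := by
  classical
  obtain ⟨J, hJcard, hJ⟩ := exists_proj v
  set el : Fin J.card → Fin N := fun p => J.orderEmbOfFin rfl p with hel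
  refine ⟨fun w => fun k =>
    if h : (k : ℕ) < J.card then decide (w (el ⟨k, h⟩) = 1) else false, ?_⟩
  intro w hw w' hw' hww
  simp only [Set.mem_setOf_eq] at hw hw'
  have hJeq : ∀ j ∈ J, w j = w' j := by
    intro j hj
    obtain ⟨p, hp⟩ : ∃ p : Fin J.card, el p = j := by
      have : j ∈ Set.range (J.orderEmbOfFin rfl) := by
        rw [Finset.range_orderEmbOfFin]
        exact hj
      obtain ⟨p, hp⟩ := this
      exact ⟨p, hp⟩
    set k : Fin r := Fin.castLE hJcard p with hk
    have hklt : (k : ℕ) < J.card := p.2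
    have := congrFun hww k
    simp only [dif_pos hklt] at this
    have hpe : el ⟨(k : ℕ), hklt⟩ = j := by
      rw [← hp]
      congr 1
    rw [hpe] at this
    have hd : (w j = 1) ↔ (w' j = 1) := by
      constructor <;> intro h
      · have := (decide_eq_decide).1 this
        exact this.1 h
      · have := (decide_eq_decide).1 this
        exact this.2 h
    rcases hw.2 j with h1 | h1 <;> rcases hw'.2 j with h2 | h2
    · rw [h1, h2]
    · rw [h1] at hd ⊢
      rw [h2] at hd ⊢
      exfalso
      have := hd.2 rfl
      norm_num at this
    · rw [h1] at hd ⊢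
      rw [h2] at hd ⊢
      exfalso
      have := hd.1 rfl
      norm_num at this
    · rw [h1, h2]
  have hdiff : w - w' ∈ span ℚ (Set.range v) := sub_mem hw.1 hw'.1
  have : w - w' = 0 := hJ _ hdiff (fun j hj => by
    simp [Pi.sub_apply, hJeq j hj])
  have := sub_eq_zero.1 this
  exact this


open Classical in
/-- a global choice of encoding function for a submodule -/
def gEnc {N r : ℕ} (W : Submodule ℚ (Fin N → ℚ)) : (Fin N → ℚ) → (Fin r → Bool) :=
  if h : ∃ f : (Fin N → ℚ) → (Fin r → Bool),
      Set.InjOn f {w | w ∈ W ∧ ∀ j, w j = 0 ∨ w j = 1} then h.choose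
  else fun _ _ => false

lemma gEnc_injOn {N r : ℕ} (v : Fin r → Fin N → ℚ) :
    Set.InjOn (gEnc (r := r) (span ℚ (Set.range v)))
      {w | w ∈ span ℚ (Set.range v) ∧ ∀ j, w j = 0 ∨ w j = 1} := by
  rw [gEnc, dif_pos (exists_enc v)]
  exact (exists_enc v).choose_spec

lemma emb_of_card_le {α : Type*} [Finite α] {n : ℕ} (h : Nat.card α ≤ n) :
    ∃ f : α → Fin n, Function.Injective f := by
  cases isEmpty_or_nonempty α
  · exact ⟨fun a => (IsEmpty.false a).elim, fun a => (IsEmpty.false a).elim⟩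
  · haveI : Fintype α := Fintype.ofFinite α
    rw [Nat.card_eq_fintype_card] at h
    exact ⟨fun a => Fin.castLE h ((Fintype.equivFin α) a),
      (Fin.castLE_injective h).comp (Fintype.equivFin α).injective⟩

section Main

variable {l N r : ℕ}

/-- witness structure extracted from a matrix in the bad set -/
structure Wit (l N r : ℕ) (M : Matrix (Fin l) (Fin N) ℚ) where
  T : Finset (Fin l)
  hT : T.card = r
  A : Matrix (Fin (r+1)) (Fin (r+1)) Bool
  x : Fin N → Fin (r+1) → Bool
  good : Good A
  sol : ∀ j, ∑ i, muOf A i * bit (x j i) = 0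
  recon : ∀ k : Fin r, M ((T.orderIsoOfFin hT k : Fin l)) = fun j => bit (x j (Fin.castSucc k))
  rows : ∀ i, M i ∈ span ℚ (Set.range (fun k : Fin r => M ((T.orderIsoOfFin hT k : Fin l))))

lemma main_wit (hl : 1 ≤ l) (M : Matrix (Fin l) (Fin N) ℚ)
    (h01 : ∀ i j, M i j = 0 ∨ M i j = 1)
    (hrank : colSpanDim M N = r)
    (hs : ∃ s : Finset (Fin l), r + 1 ≤ s.card ∧ (∀ i ∈ s, M i ≠ 0) ∧
      ∀ i ∈ s, ∀ i' ∈ s, i ≠ i' → M i ≠ M i') :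
    Nonempty (Wit l N r M) := by
  classical
  set W := span ℚ (Set.range M) with hW
  have hWr : finrank ℚ W = r := by
    have h1 : colSpanDim M N = M.rank := by
      have hsets : {v : Fin l → ℚ | ∃ j : Fin N, (j : ℕ) < N ∧ v = fun i => M i j}
          = Set.range M.transpose := by
        ext v
        constructor
        · rintro ⟨j, -, rfl⟩
          exact ⟨j, by funext i; simp [Matrix.transpose_apply]⟩
        · rintro ⟨j, rfl⟩
          exact ⟨j, j.2, by funext i; simp [Matrix.transpose_apply]⟩
      rw [colSpanDim, hsets, Matrix.rank_eq_finrank_span_cols]; rfl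
    have h2 : M.rank = finrank ℚ W := by rw [hW, Matrix.rank_eq_finrank_span_row]; rfl
    rw [← h2, ← h1, hrank]
  obtain ⟨s, hsR, hspan, hind⟩ := exists_linearIndependent ℚ (Set.range M)
  have hfin : s.Finite := hind.setFinite
  haveI := hfin.fintype
  have hscard : s.toFinset.card = r := by
    have h1 : finrank ℚ (span ℚ s) = s.toFinset.card := finrank_span_set_eq_card hind
    rw [hspan, ← hW] at h1
    rw [← h1, hWr]
  set pk : (Fin N → ℚ) → Fin l := fun w =>
    if h : ∃ i, M i = w then h.choose else ⟨0, hl⟩ with hpk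
  have hpk1 : ∀ w ∈ s, M (pk w) = w := by
    intro w hw
    obtain ⟨i, hi⟩ := hsR hw
    rw [hpk]
    simp only []
    rw [dif_pos ⟨i, hi⟩]
    exact (⟨i, hi⟩ : ∃ i, M i = w).choose_spec
  set T : Finset (Fin l) := s.toFinset.image pk with hT
  have hTcard : T.card = r := by
    rw [hT, Finset.card_image_of_injOn, hscard]
    intro w hw w' hw' hww
    rw [← hpk1 w (Set.mem_toFinset.1 hw), ← hpk1 w' (Set.mem_toFinset.1 hw'), hww]
  set ι : Fin r ≃o {x // x ∈ T} := T.orderIsoOfFin hTcard with hι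
  set vT : Fin r → (Fin N → ℚ) := fun k => M (ι k : Fin l) with hvT
  have hMT : ∀ i ∈ T, M i ∈ s := by
    intro i hi
    rw [hT] at hi
    obtain ⟨w, hw, rfl⟩ := Finset.mem_image.1 hi
    rw [hpk1 w (Set.mem_toFinset.1 hw)]
    exact Set.mem_toFinset.1 hw
  have hrangevT : Set.range vT = s := by
    apply Set.Subset.antisymm
    · rintro _ ⟨k, rfl⟩
      exact hMT _ (ι k).2
    · intro w hw
      have hpkT : pk w ∈ T := by
        rw [hT]
        exact Finset.mem_image_of_mem pk (Set.mem_toFinset.2 hw)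
      obtain ⟨k, hk⟩ := ι.surjective ⟨pk w, hpkT⟩
      refine ⟨k, ?_⟩
      rw [hvT]
      simp only []
      rw [hk]
      exact hpk1 w hw
  have hspanvT : span ℚ (Set.range vT) = W := by
    rw [hrangevT, hspan, hW]
  have hMinjT : ∀ i ∈ T, ∀ i' ∈ T, M i = M i' → i = i' := by
    intro i hi i' hi' hM
    rw [hT] at hi hi'
    obtain ⟨w, hw, rfl⟩ := Finset.mem_image.1 hi
    obtain ⟨w', hw', rfl⟩ := Finset.mem_image.1 hi'
    rw [hpk1 w (Set.mem_toFinset.1 hw), hpk1 w' (Set.mem_toFinset.1 hw')] at hM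
    rw [hM]
  have hvTinj : Function.Injective vT := by
    intro k k' h
    have := hMinjT _ (ι k).2 _ (ι k').2 h
    exact ι.injective (Subtype.ext this)
  have hvT0 : ∀ k, vT k ≠ 0 := by
    intro k
    have hmem : vT k ∈ s := hMT _ (ι k).2
    exact hind.ne_zero ⟨vT k, hmem⟩
  -- extra vector
  obtain ⟨σ, hσc, hσ0, hσd⟩ := hs
  have hex : ∃ i₀ ∈ σ, M i₀ ∉ s := by
    by_contra hno
    push_neg at hno
    have himg : σ.image M ⊆ s.toFinset := by
      intro w hw
      obtain ⟨i, hi, rfl⟩ := Finset.mem_image.1 hw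
      exact Set.mem_toFinset.2 (hno i hi)
    have hcimg : (σ.image M).card = σ.card := by
      apply Finset.card_image_of_injOn
      intro i hi i' hi' h
      by_contra hne
      exact hσd i hi i' hi' hne h
    have := Finset.card_le_card himg
    rw [hcimg, hscard] at this
    omega
  obtain ⟨i₀, hi₀σ, hi₀⟩ := hex
  set w : Fin N → ℚ := M i₀ with hw
  have hw0 : w ≠ 0 := hσ0 i₀ hi₀σ
  have hwW : w ∈ span ℚ (Set.range vT) := by
    rw [hspanvT, hW]
    exact subset_span (Set.mem_range_self i₀)
  have hwns : w ∉ Set.range vT := by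
    rw [hrangevT]; exact hi₀
  set u : Fin (r+1) → (Fin N → ℚ) := Fin.snoc vT w with hu
  have husnoc : (∀ k : Fin r, u (Fin.castSucc k) = vT k) ∧ u (Fin.last r) = w := by
    constructor
    · intro k; rw [hu]; simp [Fin.snoc_castSucc]
    · rw [hu]; simp [Fin.snoc_last]
  have huinj : Function.Injective u := by
    intro i i' h
    induction i using Fin.lastCases with
    | last =>
      induction i' using Fin.lastCases with
      | last => rfl
      | cast k' =>
        rw [husnoc.2, husnoc.1 k'] at h
        exact absurd ⟨k', h.symm⟩ hwns
    | cast k =>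
      induction i' using Fin.lastCases with
      | last =>
        rw [husnoc.2, husnoc.1 k] at h
        exact absurd ⟨k, h⟩ hwns
      | cast k' =>
        rw [husnoc.1 k, husnoc.1 k'] at h
        rw [hvTinj h]
  have hu0 : ∀ i, u i ≠ 0 := by
    intro i
    induction i using Fin.lastCases with
    | last => rw [husnoc.2]; exact hw0
    | cast k => rw [husnoc.1 k]; exact hvT0 k
  have hu01 : ∀ i j, u i j = 0 ∨ u i j = 1 := by
    intro i j
    induction i using Fin.lastCases with
    | last => rw [husnoc.2]; exact h01 i₀ j
    | cast k => rw [husnoc.1 k]; exact h01 _ j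
  obtain ⟨c, hc⟩ := (mem_span_range_iff_exists_fun ℚ).1 hwW
  set μ0 : Fin (r+1) → ℚ := Fin.snoc c (-1 : ℚ) with hμ0
  have hμ0ne : μ0 ≠ 0 := by
    intro h
    have := congrFun h (Fin.last r)
    rw [hμ0] at this
    simp [Fin.snoc_last] at this
  have hdep0 : ∀ j, ∑ i, μ0 i * u i j = 0 := by
    intro j
    rw [Fin.sum_univ_castSucc]
    have h1 : ∀ k : Fin r, μ0 (Fin.castSucc k) * u (Fin.castSucc k) j = c k * vT k j := by
      intro k
      rw [husnoc.1 k, hμ0]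
      simp [Fin.snoc_castSucc]
    have h2 : μ0 (Fin.last r) * u (Fin.last r) j = -(w j) := by
      rw [husnoc.2, hμ0]
      simp [Fin.snoc_last]
    rw [Finset.sum_congr rfl (fun k _ => h1 k), h2]
    have h3 : (∑ k : Fin r, c k * vT k j) = w j := by
      have := congrFun hc j
      rw [← this]
      simp [Finset.sum_apply, Pi.smul_apply, smul_eq_mul]
    rw [h3]
    ring
  obtain ⟨A, hAne, hAdep⟩ := exists_boolmat u hu01 μ0 hμ0ne hdep0
  have hgood : Good A := exists_three_support u huinj hu0 hu01 (muOf A) hAne hAdep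
  set x : Fin N → Fin (r+1) → Bool := fun j i => decide (u i j = 1) with hx
  have hbitx : ∀ j i, bit (x j i) = u i j := by
    intro j i
    rw [hx]
    exact bit_decide (hu01 i j)
  refine ⟨⟨T, hTcard, A, x, hgood, ?_, ?_, ?_⟩⟩
  · intro j
    have : ∀ i, muOf A i * bit (x j i) = muOf A i * u i j := fun i => by rw [hbitx]
    rw [Finset.sum_congr rfl (fun i _ => this i)]
    exact hAdep j
  · intro k
    funext j
    rw [hbitx j (Fin.castSucc k), husnoc.1 k, hvT]
  · intro i
    have : M i ∈ W := by rw [hW]; exact subset_span (Set.mem_range_self i)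
    rw [← hspanvT] at this
    exact this


abbrev BadSet (l N r : ℕ) : Type :=
  {M : Matrix (Fin l) (Fin N) ℚ //
    (∀ i j, M i j = 0 ∨ M i j = 1) ∧
    colSpanDim M N = r ∧
    ∃ s : Finset (Fin l), r + 1 ≤ s.card ∧ (∀ i ∈ s, M i ≠ 0) ∧
      ∀ i ∈ s, ∀ i' ∈ s, i ≠ i' → M i ≠ M i'}

lemma exists_injOn_to_fin {α : Type} (p : α → Prop) {n : ℕ} (hn : 0 < n)
    [Finite {x // p x}] (h : Nat.card {x // p x} ≤ n) :
    ∃ f : α → Fin n, Set.InjOn f {x | p x} := by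
  classical
  obtain ⟨g, hg⟩ := emb_of_card_le h
  refine ⟨fun x => if hx : p x then g ⟨x, hx⟩ else ⟨0, hn⟩, ?_⟩
  intro x hx y hy hxy
  simp only [Set.mem_setOf_eq] at hx hy
  simp only [dif_pos hx, dif_pos hy] at hxy
  exact congrArg Subtype.val (hg hxy)

lemma master (hl : 1 ≤ l) :
    Nat.card (BadSet l N r) ≤
      2 ^ l * ((Nat.card {A : Matrix (Fin (r+1)) (Fin (r+1)) Bool // Good A}) *
        (3 * 2 ^ (r + 1 - 3)) ^ N) * (2 ^ r) ^ (l - r) := by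
  classical
  set S3 := 3 * 2 ^ (r + 1 - 3) with hS3
  have hS3pos : 0 < S3 := by positivity
  -- solution-set encodings
  have hsolemb : ∀ A : {A : Matrix (Fin (r+1)) (Fin (r+1)) Bool // Good A},
      ∃ f : (Fin (r+1) → Bool) → Fin S3,
        Set.InjOn f {x | ∑ i, muOf A.1 i * bit (x i) = 0} := by
    intro A
    obtain ⟨a, b, c, hab, hac, hbc, ha, hb, hc⟩ := A.2
    exact exists_injOn_to_fin _ hS3pos (card_sol_le (muOf A.1) a b c hab hac hbc ha hb hc)
  choose F hF using hsolemb
  -- tail encoding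
  have hcompl : ∀ T : {T : Finset (Fin l) // T.card = r},
      Fintype.card {i : Fin l // i ∉ T.1} = l - r := by
    intro T
    have h1 := Fintype.card_subtype_compl (p := fun i : Fin l => i ∈ T.1)
    have h2 : Fintype.card {i : Fin l // i ∈ T.1} = r := by
      rw [show Fintype.card {i : Fin l // i ∈ T.1} = T.1.card from Fintype.card_coe T.1]
      exact T.2
    rw [h2, Fintype.card_fin] at h1
    exact h1
  set eqv : (T : {T : Finset (Fin l) // T.card = r}) → ({i : Fin l // i ∉ T.1} ≃ Fin (l - r)) :=
    fun T => Fintype.equivFinOfCardEq (hcompl T) with heqv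
  set tailIdx : {T : Finset (Fin l) // T.card = r} → Fin (l - r) → Fin l :=
    fun T p => ((eqv T).symm p).1 with htailIdx
  set rowIdx : (T : {T : Finset (Fin l) // T.card = r}) → Fin r → Fin l :=
    fun T k => ((T.1.orderIsoOfFin T.2) k : Fin l) with hrowIdx
  -- the witnesses
  have hwit : ∀ b : BadSet l N r, Nonempty (Wit l N r b.1) :=
    fun b => main_wit hl b.1 b.2.1 b.2.2.1 b.2.2.2
  set wit : (b : BadSet l N r) → Wit l N r b.1 := fun b => (hwit b).some with hwitdef
  -- the target type and the injection
  set Φ : BadSet l N r →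
      ({T : Finset (Fin l) // T.card = r} ×
       ({A : Matrix (Fin (r+1)) (Fin (r+1)) Bool // Good A} × (Fin N → Fin S3)) ×
       (Fin (l - r) → Fin r → Bool)) := fun b =>
    ⟨⟨(wit b).T, (wit b).hT⟩,
     ⟨⟨(wit b).A, (wit b).good⟩, fun j => F ⟨(wit b).A, (wit b).good⟩ ((wit b).x j)⟩,
     fun p => gEnc (span ℚ (Set.range (fun k : Fin r =>
        b.1 (rowIdx ⟨(wit b).T, (wit b).hT⟩ k))))
        (b.1 (tailIdx ⟨(wit b).T, (wit b).hT⟩ p))⟩ with hΦ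
  have hΦinj : Function.Injective Φ := by
    intro b b' h
    set wb := wit b with hwb
    set wb' := wit b' with hwb'
    have h1 : (⟨wb.T, wb.hT⟩ : {T : Finset (Fin l) // T.card = r}) = ⟨wb'.T, wb'.hT⟩ :=
      congrArg Prod.fst h
    have h2 := congrArg Prod.snd h
    have hA : (⟨wb.A, wb.good⟩ : {A : Matrix (Fin (r+1)) (Fin (r+1)) Bool // Good A})
        = ⟨wb'.A, wb'.good⟩ := congrArg (fun t => t.1.1) h2
    have hAA : wb.A = wb'.A := congrArg Subtype.val hA
    have hFx : ∀ j, F ⟨wb.A, wb.good⟩ (wb.x j) = F ⟨wb'.A, wb'.good⟩ (wb'.x j) :=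
      fun j => congrFun (congrArg (fun t => t.1.2) h2) j
    -- the x's agree
    have hx : wb.x = wb'.x := by
      funext j
      have hmem : wb.x j ∈ {x | ∑ i, muOf (⟨wb.A, wb.good⟩ :
          {A : Matrix (Fin (r+1)) (Fin (r+1)) Bool // Good A}).1 i * bit (x i) = 0} :=
        wb.sol j
      have hmem' : wb'.x j ∈ {x | ∑ i, muOf (⟨wb.A, wb.good⟩ :
          {A : Matrix (Fin (r+1)) (Fin (r+1)) Bool // Good A}).1 i * bit (x i) = 0} := by
        simp only [Set.mem_setOf_eq, hAA]
        exact wb'.sol j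
      apply hF ⟨wb.A, wb.good⟩ hmem hmem'
      have hFxj := hFx j
      rw [← hA] at hFxj
      exact hFxj
    -- the selected rows agree
    have hrows : ∀ k : Fin r, b.1 (rowIdx ⟨wb.T, wb.hT⟩ k) = b'.1 (rowIdx ⟨wb'.T, wb'.hT⟩ k) := by
      intro k
      have e1 : b.1 (rowIdx ⟨wb.T, wb.hT⟩ k) = fun j => bit (wb.x j (Fin.castSucc k)) :=
        wb.recon k
      have e2 : b'.1 (rowIdx ⟨wb'.T, wb'.hT⟩ k) = fun j => bit (wb'.x j (Fin.castSucc k)) :=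
        wb'.recon k
      rw [e1, e2, hx]
    have hW : span ℚ (Set.range (fun k : Fin r => b.1 (rowIdx ⟨wb.T, wb.hT⟩ k)))
        = span ℚ (Set.range (fun k : Fin r => b'.1 (rowIdx ⟨wb'.T, wb'.hT⟩ k))) := by
      have : (fun k : Fin r => b.1 (rowIdx ⟨wb.T, wb.hT⟩ k))
          = fun k : Fin r => b'.1 (rowIdx ⟨wb'.T, wb'.hT⟩ k) := funext hrows
      rw [this]
    -- tails agree
    have h3 : ∀ p, gEnc (span ℚ (Set.range (fun k : Fin r => b.1 (rowIdx ⟨wb.T, wb.hT⟩ k))))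
          (b.1 (tailIdx ⟨wb.T, wb.hT⟩ p))
        = gEnc (span ℚ (Set.range (fun k : Fin r => b'.1 (rowIdx ⟨wb'.T, wb'.hT⟩ k))))
          (b'.1 (tailIdx ⟨wb'.T, wb'.hT⟩ p)) :=
      fun p => congrFun (congrArg (fun t => t.2.2) h) p
    -- all rows agree
    have hallrows : ∀ i, b.1 i = b'.1 i := by
      intro i
      by_cases hiT : i ∈ wb.T
      · obtain ⟨k, hk⟩ := (wb.T.orderIsoOfFin wb.hT).surjective ⟨i, hiT⟩
        have hik : rowIdx ⟨wb.T, wb.hT⟩ k = i := congrArg Subtype.val hk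
        rw [← hik, hrows k]
        exact congrArg (fun T => b'.1 (rowIdx T k)) h1.symm
      · set p := eqv ⟨wb.T, wb.hT⟩ ⟨i, hiT⟩ with hp
        have hip : tailIdx ⟨wb.T, wb.hT⟩ p = i := by
          rw [htailIdx, hp]
          simp
        have := h3 p
        rw [hip] at this
        have htix : tailIdx ⟨wb'.T, wb'.hT⟩ p = i := by
          rw [← hip]
          exact congrArg (fun T => tailIdx T p) h1.symm
        rw [htix, ← hW] at this
        -- apply injectivity of gEnc
        have hinj := gEnc_injOn (fun k : Fin r => b.1 (rowIdx ⟨wb.T, wb.hT⟩ k))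
        apply hinj ?_ ?_ this
        · exact ⟨wb.rows i, b.2.1 i⟩
        · constructor
          · have hmem2 : b'.1 i ∈ span ℚ
                (Set.range (fun k : Fin r => b'.1 (rowIdx ⟨wb'.T, wb'.hT⟩ k))) := wb'.rows i
            rw [← hW] at hmem2
            exact hmem2
          · exact b'.2.1 i
    have : b.1 = b'.1 := funext hallrows
    exact Subtype.ext this
  -- count
  have hcard := Nat.card_le_card_of_injective Φ hΦinj
  have hT2 : Nat.card {T : Finset (Fin l) // T.card = r} ≤ 2 ^ l := by
    have := Nat.card_le_card_of_injective
      (fun T : {T : Finset (Fin l) // T.card = r} => T.1) Subtype.val_injective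
    calc Nat.card {T : Finset (Fin l) // T.card = r} ≤ Nat.card (Finset (Fin l)) := this
      _ = 2 ^ l := by
        rw [Nat.card_eq_fintype_card, Fintype.card_finset, Fintype.card_fin]
  calc Nat.card (BadSet l N r) ≤ _ := hcard
    _ = Nat.card {T : Finset (Fin l) // T.card = r} *
        ((Nat.card {A : Matrix (Fin (r+1)) (Fin (r+1)) Bool // Good A} * S3 ^ N) *
          (2 ^ r) ^ (l - r)) := by
      simp only [Nat.card_eq_fintype_card, Fintype.card_prod, Fintype.card_fun,
        Fintype.card_fin, Fintype.card_bool]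
    _ ≤ 2 ^ l * ((Nat.card {A : Matrix (Fin (r+1)) (Fin (r+1)) Bool // Good A} * S3 ^ N) *
          (2 ^ r) ^ (l - r)) := Nat.mul_le_mul_right _ hT2
    _ = 2 ^ l * ((Nat.card {A : Matrix (Fin (r+1)) (Fin (r+1)) Bool // Good A}) *
        S3 ^ N) * (2 ^ r) ^ (l - r) := by ring


end Main

end

end S16

theorem statement_16 :
    ∃ C : ℝ, ∀ l N r : ℕ, 1 ≤ l → 10 * l ≤ N → 1 ≤ r → r < l →
      (Nat.card {M : Matrix (Fin l) (Fin N) ℚ //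
          (∀ i j, M i j = 0 ∨ M i j = 1) ∧
          colSpanDim M N = r ∧
          ∃ s : Finset (Fin l), r + 1 ≤ s.card ∧ (∀ i ∈ s, M i ≠ 0) ∧
            ∀ i ∈ s, ∀ i' ∈ s, i ≠ i' → M i ≠ M i'} : ℝ) ≤
        C * 2 ^ (l ^ 2) * (2 : ℝ) ^ (((r : ℝ) - 1 / 10) * (N : ℝ)) := by
  classical
  refine ⟨1024, ?_⟩
  intro l N r hl hlN hr hrl
  have hmaster := S16.master (l := l) (N := N) (r := r) hl
  have hRHSpos : (0:ℝ) ≤ 1024 * 2 ^ (l ^ 2) * (2 : ℝ) ^ (((r : ℝ) - 1 / 10) * (N : ℝ)) := by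
    positivity
  rcases Nat.lt_or_ge r 2 with hr2 | hr2
  · -- r = 1 : the bad set is empty
    have hre : r = 1 := by omega
    subst hre
    have hempty : IsEmpty {A : Matrix (Fin 2) (Fin 2) Bool // S16.Good A} := by
      refine ⟨fun A => ?_⟩
      obtain ⟨a, b, c, hab, hac, hbc, -, -, -⟩ := A.2
      have h1 : a.1 ≠ b.1 := fun h => hab (Fin.ext h)
      have h2 : a.1 ≠ c.1 := fun h => hac (Fin.ext h)
      have h3 : b.1 ≠ c.1 := fun h => hbc (Fin.ext h)
      have := a.2; have := b.2; have := c.2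
      omega
    have h0 : Nat.card {A : Matrix (Fin 2) (Fin 2) Bool // S16.Good A} = 0 :=
      Nat.card_of_isEmpty
    rw [h0] at hmaster
    have hz : Nat.card (S16.BadSet l N 1) = 0 := by
      refine Nat.le_zero.1 (le_trans hmaster ?_)
      simp
    calc (Nat.card (S16.BadSet l N 1) : ℝ) = 0 := by rw [hz]; norm_num
      _ ≤ _ := hRHSpos
  · -- main case r ≥ 2
    have twopos : (0:ℝ) < 2 := by norm_num
    have hA : Nat.card {A : Matrix (Fin (r+1)) (Fin (r+1)) Bool // S16.Good A}
        ≤ 2 ^ ((r+1)*(r+1)) := by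
      calc Nat.card {A : Matrix (Fin (r+1)) (Fin (r+1)) Bool // S16.Good A}
          ≤ Nat.card (Matrix (Fin (r+1)) (Fin (r+1)) Bool) :=
            Nat.card_le_card_of_injective Subtype.val Subtype.val_injective
        _ = 2 ^ ((r+1)*(r+1)) := by
            rw [Nat.card_congr
              (Matrix.of : (Fin (r+1) → Fin (r+1) → Bool) ≃ Matrix _ _ Bool).symm,
              Nat.card_fun, Nat.card_fun]
            simp only [Nat.card_eq_fintype_card, Fintype.card_bool, Fintype.card_fin]
            rw [← pow_mul, mul_comm]
    have he : r + 1 - 3 = r - 2 := by omega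
    rw [he] at hmaster
    have hle : Nat.card (S16.BadSet l N r) ≤
        2 ^ l * (2 ^ ((r+1)*(r+1)) * (3 * 2 ^ (r - 2)) ^ N) * (2 ^ r) ^ (l - r) := by
      refine le_trans hmaster ?_
      gcongr
    -- now the real-number estimates
    have h3le : (3:ℝ) ≤ (2:ℝ) ^ ((8:ℝ)/5) := by
      have key : ((3:ℝ)) ^ (5:ℕ) ≤ ((2:ℝ) ^ ((8:ℝ)/5)) ^ (5:ℕ) := by
        rw [← Real.rpow_natCast ((2:ℝ) ^ ((8:ℝ)/5)) 5, ← Real.rpow_mul (by norm_num)]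
        rw [show ((8:ℝ)/5 * (5:ℕ)) = ((8:ℕ):ℝ) by push_cast; ring, Real.rpow_natCast]
        norm_num
      exact le_of_pow_le_pow_left₀ (by norm_num)
        (Real.rpow_pos_of_pos (by norm_num) _).le key
    have hr2R : (2:ℝ) ≤ (r:ℝ) := by exact_mod_cast hr2
    have hcast1 : ((2:ℝ))^(r-2 : ℕ) = (2:ℝ) ^ ((r:ℝ) - 2) := by
      rw [← Real.rpow_natCast 2 (r-2)]
      congr 1
      push_cast [Nat.cast_sub hr2]
      ring
    have hbase : (3:ℝ) * 2^(r-2 : ℕ) ≤ (2:ℝ) ^ ((8:ℝ)/5 + ((r:ℝ)-2)) := by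
      rw [Real.rpow_add twopos, hcast1]
      exact mul_le_mul_of_nonneg_right h3le (Real.rpow_pos_of_pos twopos _).le
    have F3 : ((3:ℝ) * 2^(r-2 : ℕ))^N ≤ (2:ℝ) ^ (((8:ℝ)/5 + ((r:ℝ)-2)) * N) := by
      calc ((3:ℝ) * 2^(r-2 : ℕ))^N ≤ ((2:ℝ) ^ ((8:ℝ)/5 + ((r:ℝ)-2)))^N :=
            pow_le_pow_left₀ (by positivity) hbase N
        _ = (2:ℝ) ^ (((8:ℝ)/5 + ((r:ℝ)-2)) * N) := by
            rw [← Real.rpow_natCast ((2:ℝ) ^ ((8:ℝ)/5 + ((r:ℝ)-2))) N,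
              ← Real.rpow_mul twopos.le]
    have F1 : ((2:ℝ))^(l : ℕ) = (2:ℝ) ^ ((l:ℝ)) := (Real.rpow_natCast 2 l).symm
    have F2 : ((2:ℝ))^((r+1)*(r+1) : ℕ) = (2:ℝ) ^ (((r:ℝ)+1)*((r:ℝ)+1)) := by
      rw [← Real.rpow_natCast 2 ((r+1)*(r+1))]
      congr 1
      push_cast
      ring
    have F4 : (((2:ℝ))^(r : ℕ))^(l - r : ℕ) = (2:ℝ) ^ ((r:ℝ) * ((l:ℝ) - (r:ℝ))) := by
      rw [← pow_mul, ← Real.rpow_natCast 2 (r * (l - r))]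
      congr 1
      push_cast [Nat.cast_sub hrl.le]
      ring
    -- final chain
    have hexp : (l:ℝ) + (((r:ℝ)+1)*((r:ℝ)+1) + ((8:ℝ)/5 + ((r:ℝ)-2)) * N)
          + (r:ℝ)*((l:ℝ)-(r:ℝ))
        ≤ 10 + (l:ℝ)^2 + ((r : ℝ) - 1/10) * N := by
      have h1 : (r : ℝ) ≤ (l : ℝ) - 1 := by
        have : (r : ℝ) + 1 ≤ (l : ℝ) := by exact_mod_cast hrl
        linarith
      have h2 : (10 : ℝ) * l ≤ N := by exact_mod_cast hlN
      have h3 : (1 : ℝ) ≤ l := by exact_mod_cast hl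
      have h5 : (r : ℝ) * l ≤ ((l : ℝ) - 1) * l := by
        apply mul_le_mul_of_nonneg_right h1
        linarith
      nlinarith [sq_nonneg ((l:ℝ) - r)]
    calc (Nat.card (S16.BadSet l N r) : ℝ)
        ≤ ((2 ^ l * (2 ^ ((r+1)*(r+1)) * (3 * 2 ^ (r - 2)) ^ N) * (2 ^ r) ^ (l - r) : ℕ) : ℝ) := by
          exact_mod_cast hle
      _ = (2:ℝ)^(l:ℕ) * ((2:ℝ)^((r+1)*(r+1) : ℕ) * ((3:ℝ) * 2^(r-2 : ℕ))^N)
            * ((2:ℝ)^(r:ℕ))^(l - r : ℕ) := by push_cast; ring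
      _ ≤ (2:ℝ)^((l:ℝ)) * ((2:ℝ)^(((r:ℝ)+1)*((r:ℝ)+1))
            * (2:ℝ)^(((8:ℝ)/5 + ((r:ℝ)-2)) * N)) * (2:ℝ)^((r:ℝ)*((l:ℝ)-(r:ℝ))) := by
          rw [F1, F2, F4]
          have hnn : (0:ℝ) ≤ (2:ℝ)^((l:ℝ)) := (Real.rpow_pos_of_pos twopos _).le
          have hnn2 : (0:ℝ) ≤ (2:ℝ)^(((r:ℝ)+1)*((r:ℝ)+1)) := (Real.rpow_pos_of_pos twopos _).le
          have hnn3 : (0:ℝ) ≤ ((2:ℝ)^((r:ℝ)*((l:ℝ)-(r:ℝ)))) := (Real.rpow_pos_of_pos twopos _).le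
          apply mul_le_mul_of_nonneg_right _ hnn3
          apply mul_le_mul_of_nonneg_left _ hnn
          apply mul_le_mul_of_nonneg_left F3 hnn2
      _ = (2:ℝ) ^ ((l:ℝ) + (((r:ℝ)+1)*((r:ℝ)+1) + ((8:ℝ)/5 + ((r:ℝ)-2)) * N)
            + (r:ℝ)*((l:ℝ)-(r:ℝ))) := by
          rw [← Real.rpow_add twopos, ← Real.rpow_add twopos, ← Real.rpow_add twopos]
      _ ≤ (2:ℝ) ^ ((10:ℝ) + (l:ℝ)^2 + ((r : ℝ) - 1/10) * N) := by
          exact Real.rpow_le_rpow_of_exponent_le (by norm_num) hexp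
      _ = 1024 * 2 ^ (l ^ 2) * (2 : ℝ) ^ (((r : ℝ) - 1 / 10) * (N : ℝ)) := by
          rw [Real.rpow_add twopos, Real.rpow_add twopos]
          congr 2
          · rw [show ((10:ℝ)) = ((10:ℕ):ℝ) by norm_num, Real.rpow_natCast]
            norm_num
          · rw [show ((l:ℝ)^2) = ((l^2 : ℕ):ℝ) by push_cast; ring, Real.rpow_natCast]
end

section
/- There exist an absolute constant c > 0 and an absolute threshold R₀ such that the following holds for all integers R and N with R₀ ≤ R ≤ N. Let X be the random variable taking values in the integers of (N, N+R] with ℙ(X = j) proportional to 1/j (i.e. ℙ(X = j) = (1/j) / Σ_{N < j' ≤ N+R} (1/j') for N < j ≤ N+R), and let φ_X(ξ) := 𝔼[e^{iξX}] be its characteristic function. Then: (1) for all real ξ with |ξ| ≤ 16/R one has |φ_X(ξ)| ≤ 1 − c·ξ²·R²; and (2) for all real ξ with 16/R ≤ |ξ| ≤ π one has |φ_X(ξ)| ≤ 1/2. -/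
open Finset

/-! ### Auxiliary lemmas -/

lemma my_S_lb (N R : ℕ) (hN : 1 ≤ N) :
    (R:ℝ)/((N:ℝ)+R) ≤ ∑ j ∈ Finset.Ioc N (N+R), ((j:ℝ))⁻¹ := by
  have hN' : (0:ℝ) < N := by exact_mod_cast hN
  have h1 : ∀ j ∈ Finset.Ioc N (N+R), ((N:ℝ)+R)⁻¹ ≤ (j:ℝ)⁻¹ := by
    intro j hj
    rw [Finset.mem_Ioc] at hj
    have hj2 : (j:ℝ) ≤ (N:ℝ)+R := by exact_mod_cast hj.2
    have hj1 : (0:ℝ) < j := by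
      have : 0 < j := by omega
      exact_mod_cast this
    exact inv_anti₀ hj1 hj2
  have h2 := Finset.card_nsmul_le_sum (Finset.Ioc N (N+R)) (fun j => ((j:ℝ))⁻¹) _ h1
  rw [Nat.card_Ioc] at h2
  have hcard : N + R - N = R := by omega
  rw [hcard, nsmul_eq_mul] at h2
  rw [div_eq_mul_inv]
  exact h2

lemma my_S_ub (N R : ℕ) (hN : 1 ≤ N) :
    ∑ j ∈ Finset.Ioc N (N+R), ((j:ℝ))⁻¹ ≤ (R:ℝ)/(N:ℝ) := by
  have hN' : (0:ℝ) < N := by exact_mod_cast hN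
  have h1 : ∀ j ∈ Finset.Ioc N (N+R), (j:ℝ)⁻¹ ≤ ((N:ℝ))⁻¹ := by
    intro j hj
    rw [Finset.mem_Ioc] at hj
    have hj2 : (N:ℝ) ≤ (j:ℝ) := by exact_mod_cast hj.1.le
    exact inv_anti₀ hN' hj2
  have h2 := Finset.sum_le_card_nsmul (Finset.Ioc N (N+R)) (fun j => ((j:ℝ))⁻¹) _ h1
  rw [Nat.card_Ioc] at h2
  have hcard : N + R - N = R := by omega
  rw [hcard, nsmul_eq_mul] at h2
  rw [div_eq_mul_inv]
  exact h2

lemma my_normSq_expand (T : Finset ℕ) (w : ℕ → ℝ) (ξ : ℝ) :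
    (‖∑ j ∈ T, ((w j : ℝ) : ℂ) * Complex.exp ((ξ * (j:ℝ) : ℝ) * Complex.I)‖)^2
      = ∑ j ∈ T, ∑ k ∈ T, w j * w k * Real.cos (ξ * j - ξ * k) := by
  set num := ∑ j ∈ T, ((w j : ℝ) : ℂ) * Complex.exp ((ξ * (j:ℝ) : ℝ) * Complex.I) with hnum
  rw [Complex.sq_norm]
  have h1 : (Complex.normSq num : ℝ) = (num * (starRingEnd ℂ) num).re := by
    rw [Complex.mul_conj]; simp
  rw [h1]
  have hconj : (starRingEnd ℂ) num
      = ∑ k ∈ T, ((w k : ℝ) : ℂ) * Complex.exp (((-(ξ * k)) : ℝ) * Complex.I) := by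
    rw [map_sum]
    refine Finset.sum_congr rfl fun k _ => ?_
    rw [map_mul, Complex.conj_ofReal, ← Complex.exp_conj]
    congr 1
    rw [map_mul, Complex.conj_ofReal, Complex.conj_I]
    push_cast
    ring
  rw [hconj, hnum, Finset.sum_mul_sum]
  rw [Complex.re_sum]
  refine Finset.sum_congr rfl fun j _ => ?_
  rw [Complex.re_sum]
  refine Finset.sum_congr rfl fun k _ => ?_
  have : ((w j : ℝ) : ℂ) * Complex.exp ((ξ * (j:ℝ) : ℝ) * Complex.I) *
      (((w k : ℝ) : ℂ) * Complex.exp (((-(ξ * k)) : ℝ) * Complex.I))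
      = ((w j * w k : ℝ) : ℂ) * Complex.exp (((ξ * j - ξ * k : ℝ)) * Complex.I) := by
    rw [show ((ξ * (j:ℝ) - ξ * (k:ℝ) : ℝ) : ℂ) * Complex.I
        = ((ξ * (j:ℝ) : ℝ) : ℂ) * Complex.I + ((-(ξ * (k:ℝ)) : ℝ) : ℂ) * Complex.I by
      push_cast; ring]
    rw [Complex.exp_add]
    push_cast
    ring
  rw [this, Complex.re_ofReal_mul, Complex.exp_ofReal_mul_I_re]

lemma my_abel_key (w : ℕ → ℝ) (a : ℕ → ℂ) (N : ℕ) (M : ℝ)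
    (hw : ∀ j, N + 1 ≤ j → w (j+1) ≤ w j)
    (hM : ∀ t, N < t → ‖∑ j ∈ Finset.Ioc N t, a j‖ ≤ M) :
    ∀ n, 1 ≤ n →
      ‖(∑ j ∈ Finset.Ioc N (N+n), (w j : ℂ) * a j)
        - (w (N+n) : ℂ) * ∑ j ∈ Finset.Ioc N (N+n), a j‖ ≤ (w (N+1) - w (N+n)) * M := by
  intro n hn
  induction n with
  | zero => omega
  | succ n ih =>
    rcases Nat.eq_or_lt_of_le hn with h1 | h1
    · have : n = 0 := by omega
      subst this
      have : Finset.Ioc N (N+1) = {N+1} := by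
        ext x; simp only [Finset.mem_Ioc, Finset.mem_singleton]; omega
      simp [this]
    · have hn1 : 1 ≤ n := by omega
      have hstep : ∀ f : ℕ → ℂ, ∑ j ∈ Finset.Ioc N (N+(n+1)), f j
          = (∑ j ∈ Finset.Ioc N (N+n), f j) + f (N+n+1) := by
        intro f
        have : N + (n+1) = (N+n) + 1 := by omega
        rw [this, Finset.sum_Ioc_succ_top (by omega)]
      have key : (∑ j ∈ Finset.Ioc N (N+(n+1)), (w j : ℂ) * a j)
          - (w (N+(n+1)) : ℂ) * ∑ j ∈ Finset.Ioc N (N+(n+1)), a j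
          = ((∑ j ∈ Finset.Ioc N (N+n), (w j : ℂ) * a j)
              - (w (N+n) : ℂ) * ∑ j ∈ Finset.Ioc N (N+n), a j)
            + ((w (N+n) : ℂ) - (w (N+n+1) : ℂ)) * ∑ j ∈ Finset.Ioc N (N+n), a j := by
        rw [hstep (fun j => (w j : ℂ) * a j), hstep a]
        ring_nf
      rw [key]
      refine (norm_add_le _ _).trans ?_
      have h2 := ih hn1
      have h3 : ‖((w (N+n) : ℂ) - (w (N+n+1) : ℂ)) * ∑ j ∈ Finset.Ioc N (N+n), a j‖
          ≤ (w (N+n) - w (N+n+1)) * M := by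
        rw [norm_mul]
        have : ((w (N+n) : ℂ) - (w (N+n+1) : ℂ)) = ((w (N+n) - w (N+n+1) : ℝ) : ℂ) := by push_cast; ring
        rw [this, Complex.norm_real, Real.norm_eq_abs, abs_of_nonneg (by have := hw (N+n) (by omega); linarith)]
        exact mul_le_mul_of_nonneg_left (hM _ (by omega)) (by have := hw (N+n) (by omega); linarith)
      have : N + (n+1) = N + n + 1 := rfl
      rw [this]
      nlinarith [h2, h3]

lemma my_exp_ne_one_of (ξ : ℝ) (h0 : ξ ≠ 0) (hπ : |ξ| ≤ Real.pi) :
    Complex.exp ((ξ : ℂ) * Complex.I) ≠ 1 := by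
  intro h
  rw [Complex.exp_eq_one_iff] at h
  obtain ⟨n, hn⟩ := h
  have h2 : (ξ : ℂ) * Complex.I = ((n : ℂ) * (2 * (Real.pi:ℂ))) * Complex.I := by
    rw [hn]; ring
  have : (ξ : ℂ) = (n : ℂ) * (2 * Real.pi) := mul_right_cancel₀ Complex.I_ne_zero h2
  have hξ : ξ = (n : ℝ) * (2 * Real.pi) := by
    exact_mod_cast this
  rcases eq_or_ne n 0 with rfl | hn0
  · simp at hξ; exact h0 hξ
  · have h1 : (1 : ℝ) ≤ |(n : ℝ)| := by
      rw [← Int.cast_abs]; exact_mod_cast Int.one_le_abs hn0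
    have hpi := Real.pi_pos
    rw [hξ, abs_mul, abs_of_pos (by linarith : (0:ℝ) < 2 * Real.pi)] at hπ
    nlinarith

lemma my_abs_exp_mul_I_sub_one (ξ : ℝ) (hπ : |ξ| ≤ Real.pi) :
    2 * |ξ| / Real.pi ≤ ‖Complex.exp ((ξ : ℂ) * Complex.I) - 1‖ := by
  have hsq : Complex.normSq (Complex.exp ((ξ : ℂ) * Complex.I) - 1) = 2 - 2 * Real.cos ξ := by
    rw [Complex.exp_mul_I]
    simp [Complex.normSq_apply, Complex.cos_ofReal_re, Complex.sin_ofReal_re,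
      Complex.add_re, Complex.add_im, Complex.mul_re, Complex.mul_im]
    nlinarith [Real.sin_sq_add_cos_sq ξ]
  have hcos := Real.cos_le_one_sub_mul_cos_sq hπ
  have hpi := Real.pi_pos
  have h1 : (2 * |ξ| / Real.pi) ^ 2 ≤ Complex.normSq (Complex.exp ((ξ : ℂ) * Complex.I) - 1) := by
    rw [hsq]
    rw [div_pow, mul_pow, sq_abs]
    rw [div_le_iff₀ (by positivity)]
    have hfs : 2/Real.pi^2*ξ^2 * Real.pi^2 = 2*ξ^2 := by field_simp
    nlinarith [mul_le_mul_of_nonneg_right hcos (sq_nonneg Real.pi)]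
  have h2 := Complex.sq_norm (Complex.exp ((ξ : ℂ) * Complex.I) - 1)
  nlinarith [norm_nonneg (Complex.exp ((ξ : ℂ) * Complex.I) - 1), abs_nonneg ξ,
    sq_nonneg (2 * |ξ| / Real.pi - ‖Complex.exp ((ξ : ℂ) * Complex.I) - 1‖)]

lemma my_geom_bound (ξ : ℝ) (h0 : ξ ≠ 0) (hπ : |ξ| ≤ Real.pi) (N t : ℕ) :
    ‖∑ j ∈ Finset.Ioc N t, Complex.exp ((ξ * (j:ℝ) : ℝ) * Complex.I)‖
      ≤ Real.pi / |ξ| := by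
  have hpi := Real.pi_pos
  have hξa : 0 < |ξ| := abs_pos.mpr h0
  set z : ℂ := Complex.exp ((ξ : ℂ) * Complex.I) with hz
  have hzj : ∀ j : ℕ, Complex.exp ((ξ * (j:ℝ) : ℝ) * Complex.I) = z ^ j := by
    intro j
    rw [hz, ← Complex.exp_nat_mul]
    congr 1
    push_cast
    ring
  have hz1 : z ≠ 1 := my_exp_ne_one_of ξ h0 hπ
  have habs : ∀ j : ℕ, ‖z ^ j‖ = 1 := by
    intro j
    rw [norm_pow]
    rw [hz, Complex.norm_exp]
    simp [Complex.mul_re, Complex.I_re, Complex.I_im]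
  calc ‖∑ j ∈ Finset.Ioc N t, Complex.exp ((ξ * (j:ℝ) : ℝ) * Complex.I)‖
      = ‖∑ j ∈ Finset.Ioc N t, z ^ j‖ := by
        congr 1; exact Finset.sum_congr rfl fun j _ => hzj j
    _ ≤ Real.pi / |ξ| := by
        rcases le_or_gt t N with h | h
        · rw [Finset.Ioc_eq_empty (by omega)]
          simp [le_div_iff₀ hξa]
          nlinarith
        · have hsum : ∑ j ∈ Finset.Ioc N t, z ^ j = (z ^ (t+1) - z ^ (N+1)) / (z - 1) := by
            rw [← Finset.Ico_add_one_add_one_eq_Ioc]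
            exact geom_sum_Ico hz1 (by omega)
          rw [hsum, norm_div]
          have hz1' : (0:ℝ) < ‖z - 1‖ := by
            rw [norm_pos_iff, sub_ne_zero]; exact hz1
          have hnum : ‖z ^ (t+1) - z ^ (N+1)‖ ≤ 2 := by
            refine (norm_sub_le _ _).trans ?_
            rw [habs, habs]; norm_num
          have hden := my_abs_exp_mul_I_sub_one ξ hπ
          rw [div_le_div_iff₀ hz1' hξa]
          have h2 : 2 * |ξ| ≤ Real.pi * ‖z - 1‖ := by
            rw [div_le_iff₀ hpi] at hden
            linarith [hden]
          calc ‖z ^ (t+1) - z ^ (N+1)‖ * |ξ| ≤ 2 * |ξ| := by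
                nlinarith [abs_nonneg ξ]
            _ ≤ Real.pi * ‖z - 1‖ := h2

lemma my_pi_sq : Real.pi^2 ≤ 16 := by nlinarith [Real.pi_le_four, Real.pi_pos]

lemma my_div_sq {r mm : ℝ} (h : r/17 ≤ mm) (hr : 0 ≤ r) : r^2/289 ≤ mm^2 := by nlinarith

lemma my_sq_step {A S B : ℝ} (h1 : A^2 ≤ S^2 - 2*B*S^2) : A^2 ≤ (S*(1-B))^2 := by
  nlinarith [sq_nonneg (S*B)]

/-- The characteristic function `φ_X(ξ) = 𝔼[e^{iξX}]` of the random variable `X`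
taking integer values in `(N, N+R]` with `ℙ(X = j)` proportional to `1/j`. -/
noncomputable def phiX (N R : ℕ) (ξ : ℝ) : ℂ :=
  (∑ j ∈ Finset.Ioc N (N + R), ((j : ℂ))⁻¹ * Complex.exp ((ξ * (j : ℝ) : ℝ) * Complex.I)) /
    ((∑ j ∈ Finset.Ioc N (N + R), ((j : ℝ))⁻¹ : ℝ) : ℂ)

set_option maxHeartbeats 2000000 in
theorem statement_17 :
    ∃ c : ℝ, 0 < c ∧ ∃ R₀ : ℕ, ∀ R N : ℕ, R₀ ≤ R → R ≤ N →
      (∀ ξ : ℝ, |ξ| ≤ 16 / (R : ℝ) →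
        ‖phiX N R ξ‖ ≤ 1 - c * ξ ^ 2 * (R : ℝ) ^ 2) ∧
      (∀ ξ : ℝ, 16 / (R : ℝ) ≤ |ξ| → |ξ| ≤ Real.pi →
        ‖phiX N R ξ‖ ≤ 1 / 2) := by
  refine ⟨1/400000, by norm_num, 400, fun R N hR hRN => ?_⟩
  have hR1 : 1 ≤ R := by omega
  have hN1 : 1 ≤ N := by omega
  have hRpos : (0:ℝ) < R := by exact_mod_cast hR1
  have hNpos : (0:ℝ) < N := by exact_mod_cast hN1
  have hRN' : (R:ℝ) ≤ N := by exact_mod_cast hRN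
  have hR400 : (400:ℝ) ≤ R := by exact_mod_cast hR
  set w : ℕ → ℝ := fun j => ((j:ℝ))⁻¹ with hw
  set S : ℝ := ∑ j ∈ Finset.Ioc N (N+R), w j with hS
  have hS_lb : (R:ℝ)/((N:ℝ)+R) ≤ S := my_S_lb N R hN1
  have hS_ub : S ≤ (R:ℝ)/(N:ℝ) := my_S_ub N R hN1
  have hSpos : 0 < S := lt_of_lt_of_le (by positivity) hS_lb
  have hphi : ∀ ξ : ℝ, ‖phiX N R ξ‖
      = ‖∑ j ∈ Finset.Ioc N (N+R),
          ((w j : ℝ):ℂ) * Complex.exp ((ξ * (j:ℝ) : ℝ) * Complex.I)‖ / S := by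
    intro ξ
    have hnum : (∑ j ∈ Finset.Ioc N (N + R), ((j : ℂ))⁻¹ * Complex.exp ((ξ * (j : ℝ) : ℝ) * Complex.I))
        = ∑ j ∈ Finset.Ioc N (N+R), ((w j : ℝ):ℂ) * Complex.exp ((ξ * (j:ℝ) : ℝ) * Complex.I) := by
      refine Finset.sum_congr rfl fun j _ => ?_
      congr 1
      rw [hw]
      push_cast
      ring
    rw [phiX, hnum, norm_div, Complex.norm_real, Real.norm_eq_abs, abs_of_pos hSpos]
  have habs_le_S : ∀ ξ : ℝ, ‖∑ j ∈ Finset.Ioc N (N+R),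
      ((w j : ℝ):ℂ) * Complex.exp ((ξ * (j:ℝ) : ℝ) * Complex.I)‖ ≤ S := by
    intro ξ
    refine (norm_sum_le _ _).trans ?_
    rw [hS]
    refine Finset.sum_le_sum fun j hj => ?_
    rw [norm_mul, Complex.norm_real, Real.norm_eq_abs, Complex.norm_exp_ofReal_mul_I, mul_one]
    exact le_of_eq (abs_of_nonneg (by positivity))
  constructor
  · -- Part 1
    intro ξ hξ
    set m := R/16 with hm
    have hmod := Nat.div_add_mod R 16
    have hmlt : R % 16 < 16 := Nat.mod_lt R (by norm_num)
    have h16m : 16 * m ≤ R := by omega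
    have h16m' : R < 16 * (m+1) := by omega
    have h2mR : 2 * m ≤ R := by omega
    have hm1 : 1 ≤ m := by omega
    have hmR16 : (m:ℝ) ≤ (R:ℝ)/16 := by
      have : (16:ℝ) * m ≤ R := by exact_mod_cast h16m
      linarith
    have hm17 : (R:ℝ)/17 ≤ (m:ℝ) := by
      have : (R:ℝ) < 16 * ((m:ℝ)+1) := by exact_mod_cast h16m'
      linarith
    have hπ := Real.pi_pos
    have hπ3 : 3 ≤ Real.pi := by linarith [Real.pi_gt_three]
    have hπ4 : Real.pi ≤ 4 := Real.pi_le_four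
    have hπ2 : Real.pi^2 ≤ 16 := my_pi_sq
    set T := Finset.Ioc N (N+R) with hT
    set Anum := ∑ j ∈ T, ((w j : ℝ):ℂ) * Complex.exp ((ξ * (j:ℝ) : ℝ) * Complex.I) with hAnum
    set A := ‖Anum‖ with hA
    have hA0 : 0 ≤ A := norm_nonneg _
    have hAS : A ≤ S := habs_le_S ξ
    have hA2 : A^2 = ∑ j ∈ T, ∑ k ∈ T, w j * w k * Real.cos (ξ * j - ξ * k) :=
      my_normSq_expand T w ξ
    have hS2 : S^2 = ∑ j ∈ T, ∑ k ∈ T, w j * w k := by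
      rw [sq, hS, Finset.sum_mul_sum]
    have hdiff : S^2 - A^2
        = ∑ j ∈ T, ∑ k ∈ T, w j * w k * (1 - Real.cos (ξ * j - ξ * k)) := by
      rw [hS2, hA2, ← Finset.sum_sub_distrib]
      refine Finset.sum_congr rfl fun j _ => ?_
      rw [← Finset.sum_sub_distrib]
      refine Finset.sum_congr rfl fun k _ => ?_
      ring
    have hterm0 : ∀ j k : ℕ, 0 ≤ w j * w k * (1 - Real.cos (ξ * j - ξ * k)) := by
      intro j k
      have h1 : (0:ℝ) ≤ w j := by rw [hw]; positivity
      have h2 : (0:ℝ) ≤ w k := by rw [hw]; positivity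
      have h3 := Real.cos_le_one (ξ * j - ξ * k)
      exact mul_nonneg (mul_nonneg h1 h2) (by linarith)
    set eps := ξ^2 * (m:ℝ)^2 / (2 * Real.pi^2 * (N:ℝ)^2) with heps
    -- per-term lower bound
    have hper : ∀ j ∈ Finset.Ioc N (N + (R - 2*m)), ∀ k ∈ Finset.Ioc (j+m) (j+2*m),
        eps ≤ w j * w k * (1 - Real.cos (ξ * j - ξ * k)) := by
      intro j hj k hk
      rw [Finset.mem_Ioc] at hj hk
      have hjN : N < j := hj.1
      have hjle : j ≤ N + R := by omega
      have hkle : k ≤ N + R := by omega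
      have hj2N : (j:ℝ) ≤ 2*N := by
        have : j ≤ 2*N := by omega
        exact_mod_cast this
      have hk2N : (k:ℝ) ≤ 2*N := by
        have : k ≤ 2*N := by omega
        exact_mod_cast this
      have hjpos : (0:ℝ) < j := by
        have : 0 < j := by omega
        exact_mod_cast this
      have hkpos : (0:ℝ) < k := by
        have : 0 < k := by omega
        exact_mod_cast this
      have hwj : (2*(N:ℝ))⁻¹ ≤ w j := by
        rw [hw]; exact inv_anti₀ hjpos hj2N
      have hwk : (2*(N:ℝ))⁻¹ ≤ w k := by
        rw [hw]; exact inv_anti₀ hkpos hk2N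
      have hkj_lb : (m:ℝ) ≤ (k:ℝ) - j := by
        have : j + m + 1 ≤ k := by omega
        have h' : ((j + m + 1 : ℕ):ℝ) ≤ (k:ℝ) := by exact_mod_cast this
        push_cast at h'
        linarith
      have hkj_ub : (k:ℝ) - j ≤ 2*m := by
        have : k ≤ j + 2*m := hk.2
        have h' : (k:ℝ) ≤ ((j + 2*m : ℕ):ℝ) := by exact_mod_cast this
        push_cast at h'
        linarith
      have hkj0 : (0:ℝ) ≤ (k:ℝ) - j := by
        have : (0:ℝ) ≤ (m:ℝ) := by positivity
        linarith
      set t := ξ * (j:ℝ) - ξ * (k:ℝ) with ht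
      have habst : |t| ≤ Real.pi := by
        have h1 : |t| = |ξ| * ((k:ℝ) - j) := by
          rw [ht, show ξ * (j:ℝ) - ξ * (k:ℝ) = -(ξ * ((k:ℝ) - j)) by ring, abs_neg,
            abs_mul, abs_of_nonneg hkj0]
        rw [h1]
        have h2 : |ξ| * ((k:ℝ) - j) ≤ (16/R) * (2*m) :=
          mul_le_mul hξ hkj_ub hkj0 (by positivity)
        have h3 : (16/(R:ℝ)) * (2*m) ≤ 2 := by
          rw [div_mul_eq_mul_div, div_le_iff₀ hRpos]
          linarith [hmR16]
        linarith
      have hcosb : 2/Real.pi^2 * t^2 ≤ 1 - Real.cos t :=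
        by linarith [Real.cos_le_one_sub_mul_cos_sq habst]
      have hsq : ξ^2 * (m:ℝ)^2 ≤ t^2 := by
        rw [ht]
        have : (ξ * (j:ℝ) - ξ * (k:ℝ))^2 = ξ^2 * ((k:ℝ) - j)^2 := by ring
        rw [this]
        have hm0 : (0:ℝ) ≤ (m:ℝ) := by positivity
        exact mul_le_mul_of_nonneg_left (pow_le_pow_left₀ hm0 hkj_lb 2) (sq_nonneg ξ)
      have hX : 2/Real.pi^2 * (ξ^2 * (m:ℝ)^2) ≤ 1 - Real.cos t := by
        refine le_trans ?_ hcosb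
        exact mul_le_mul_of_nonneg_left hsq (by positivity)
      have hprod : (2*(N:ℝ))⁻¹ * (2*(N:ℝ))⁻¹ * (2/Real.pi^2 * (ξ^2 * (m:ℝ)^2))
          ≤ w j * w k * (1 - Real.cos t) := by
        refine mul_le_mul (mul_le_mul hwj hwk (by positivity)
          (le_trans (by positivity) hwj)) hX (by positivity) ?_
        have h1 : (0:ℝ) ≤ w j := by rw [hw]; positivity
        have h2 : (0:ℝ) ≤ w k := by rw [hw]; positivity
        positivity
      refine le_trans (le_of_eq ?_) hprod
      rw [heps]
      field_simp
    -- inner sums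
    have hinner : ∀ j ∈ Finset.Ioc N (N + (R - 2*m)),
        (m:ℝ) * eps ≤ ∑ k ∈ T, w j * w k * (1 - Real.cos (ξ * j - ξ * k)) := by
      intro j hj
      have hsubset : Finset.Ioc (j+m) (j+2*m) ⊆ T := by
        rw [hT]
        apply Finset.Ioc_subset_Ioc
        · rw [Finset.mem_Ioc] at hj; omega
        · rw [Finset.mem_Ioc] at hj; omega
      have h1 : (m:ℝ) * eps ≤ ∑ k ∈ Finset.Ioc (j+m) (j+2*m),
          w j * w k * (1 - Real.cos (ξ * j - ξ * k)) := by
        have h2 := Finset.card_nsmul_le_sum (Finset.Ioc (j+m) (j+2*m))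
          (fun k => w j * w k * (1 - Real.cos (ξ * j - ξ * k))) eps (hper j hj)
        rw [Nat.card_Ioc] at h2
        have hcard : j + 2*m - (j+m) = m := by omega
        rw [hcard, nsmul_eq_mul] at h2
        exact h2
      refine h1.trans ?_
      exact Finset.sum_le_sum_of_subset_of_nonneg hsubset (fun k _ _ => hterm0 j k)
    -- outer sum
    have houter : ((R - 2*m : ℕ):ℝ) * ((m:ℝ) * eps) ≤ S^2 - A^2 := by
      rw [hdiff]
      have hsubset : Finset.Ioc N (N + (R - 2*m)) ⊆ T := by
        rw [hT]
        exact Finset.Ioc_subset_Ioc le_rfl (by omega)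
      have h1 : ((R - 2*m : ℕ):ℝ) * ((m:ℝ) * eps)
          ≤ ∑ j ∈ Finset.Ioc N (N + (R - 2*m)),
              ∑ k ∈ T, w j * w k * (1 - Real.cos (ξ * j - ξ * k)) := by
        have h2 := Finset.card_nsmul_le_sum (Finset.Ioc N (N + (R - 2*m)))
          (fun j => ∑ k ∈ T, w j * w k * (1 - Real.cos (ξ * j - ξ * k)))
          ((m:ℝ) * eps) hinner
        rw [Nat.card_Ioc] at h2
        have hcard : N + (R - 2*m) - N = R - 2*m := by omega
        rw [hcard, nsmul_eq_mul] at h2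
        exact h2
      refine h1.trans ?_
      refine Finset.sum_le_sum_of_subset_of_nonneg hsubset (fun j _ _ => ?_)
      exact Finset.sum_nonneg fun k _ => hterm0 j k
    -- numerics
    have hcount : 7*(R:ℝ)/8 ≤ ((R - 2*m : ℕ):ℝ) := by
      rw [Nat.cast_sub h2mR]
      push_cast
      linarith [hmR16]
    have ham : (R:ℝ)^2/289 ≤ (m:ℝ)^2 := my_div_sq hm17 hRpos.le
    have hepslb : ξ^2*(R:ℝ)^2/(9248*(N:ℝ)^2) ≤ eps := by
      rw [heps, div_le_div_iff₀ (by positivity) (by positivity)]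
      have k1 : Real.pi^2*(R:ℝ)^2 ≤ 16*(R:ℝ)^2 :=
        mul_le_mul_of_nonneg_right hπ2 (sq_nonneg _)
      have key : 2*Real.pi^2*(R:ℝ)^2 ≤ 9248*(m:ℝ)^2 := by linarith [k1, ham]
      have h := mul_le_mul_of_nonneg_left key (mul_nonneg (sq_nonneg ξ) (sq_nonneg (N:ℝ)))
      calc ξ^2*(R:ℝ)^2 * (2*Real.pi^2*(N:ℝ)^2)
          = (ξ^2*(N:ℝ)^2) * (2*Real.pi^2*(R:ℝ)^2) := by ring
        _ ≤ (ξ^2*(N:ℝ)^2) * (9248*(m:ℝ)^2) := h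
        _ = ξ^2*(m:ℝ)^2 * (9248*(N:ℝ)^2) := by ring
    have heps0 : (0:ℝ) ≤ ξ^2*(R:ℝ)^2/(9248*(N:ℝ)^2) := by positivity
    have hfinal1 : ξ^2*(R:ℝ)^4/(200000*(N:ℝ)^2) ≤ S^2 - A^2 := by
      have hme : (R:ℝ)/17 * (ξ^2*(R:ℝ)^2/(9248*(N:ℝ)^2)) ≤ (m:ℝ) * eps :=
        mul_le_mul hm17 hepslb heps0 (by positivity)
      have hce : 7*(R:ℝ)/8 * ((R:ℝ)/17 * (ξ^2*(R:ℝ)^2/(9248*(N:ℝ)^2)))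
          ≤ ((R - 2*m : ℕ):ℝ) * ((m:ℝ) * eps) := by
        refine mul_le_mul hcount hme (by positivity) ?_
        exact le_trans (by positivity) hcount
      refine le_trans ?_ (hce.trans houter)
      have heq : 7*(R:ℝ)/8 * ((R:ℝ)/17 * (ξ^2*(R:ℝ)^2/(9248*(N:ℝ)^2)))
          = 7*ξ^2*(R:ℝ)^4/(1257728*(N:ℝ)^2) := by ring
      rw [heq, div_le_div_iff₀ (by positivity) (by positivity)]
      have hX : (0:ℝ) ≤ ξ^2*(R:ℝ)^4*(N:ℝ)^2 := by positivity
      calc ξ^2*(R:ℝ)^4 * (1257728*(N:ℝ)^2) = 1257728*(ξ^2*(R:ℝ)^4*(N:ℝ)^2) := by ring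
        _ ≤ 1400000*(ξ^2*(R:ℝ)^4*(N:ℝ)^2) := by linarith
        _ = 7*ξ^2*(R:ℝ)^4 * (200000*(N:ℝ)^2) := by ring
    have hS2ub : S^2 ≤ (R:ℝ)^2/(N:ℝ)^2 := by
      have := pow_le_pow_left₀ hSpos.le hS_ub 2
      rw [div_pow] at this
      exact this
    have hB256 : ξ^2 * (R:ℝ)^2 ≤ 256 := by
      have h1 : ξ^2 ≤ (16/(R:ℝ))^2 := by
        rw [← sq_abs ξ]
        exact pow_le_pow_left₀ (abs_nonneg ξ) hξ 2
      have h2 : (16/(R:ℝ))^2 * (R:ℝ)^2 = 256 := by field_simp; norm_num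
      calc ξ^2 * (R:ℝ)^2 ≤ (16/(R:ℝ))^2 * (R:ℝ)^2 :=
            mul_le_mul_of_nonneg_right h1 (sq_nonneg _)
        _ = 256 := h2
    set B := (1/400000 : ℝ) * ξ^2 * (R:ℝ)^2 with hB
    have hB0 : 0 ≤ B := by rw [hB]; positivity
    have hB1 : B ≤ 1 := by rw [hB]; linarith [hB256]
    have h2eps : 2 * B * S^2 ≤ ξ^2*(R:ℝ)^4/(200000*(N:ℝ)^2) := by
      have heq : ξ^2*(R:ℝ)^4/(200000*(N:ℝ)^2) = (ξ^2*(R:ℝ)^2/200000) * ((R:ℝ)^2/(N:ℝ)^2) := by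
        ring
      rw [heq, hB]
      have h := mul_le_mul_of_nonneg_left hS2ub (by positivity : (0:ℝ) ≤ ξ^2*(R:ℝ)^2/200000)
      calc 2 * ((1/400000:ℝ) * ξ^2 * (R:ℝ)^2) * S^2
          = (ξ^2*(R:ℝ)^2/200000) * S^2 := by ring
        _ ≤ (ξ^2*(R:ℝ)^2/200000) * ((R:ℝ)^2/(N:ℝ)^2) := h
    set C := S * (1 - B) with hC
    have hC0 : 0 ≤ C := by
      rw [hC]
      exact mul_nonneg hSpos.le (by linarith)
    have hAC2 : A^2 ≤ C^2 := by
      rw [hC]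
      have h1 : A^2 ≤ S^2 - 2*B*S^2 := by linarith [hfinal1, h2eps]
      exact my_sq_step h1
    have hACle : A ≤ C := by
      rw [← Real.sqrt_sq hA0, ← Real.sqrt_sq hC0]
      exact Real.sqrt_le_sqrt hAC2
    rw [hphi ξ, div_le_iff₀ hSpos]
    show A ≤ (1 - B) * S
    calc A ≤ C := hACle
      _ = (1 - B) * S := by rw [hC]; ring
  · -- Part 2
    intro ξ hlo hhi
    have hξ0 : ξ ≠ 0 := by
      intro h
      rw [h, abs_zero] at hlo
      have : (0:ℝ) < 16 / R := by positivity
      linarith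
    have hξa : 0 < |ξ| := abs_pos.mpr hξ0
    set M : ℝ := Real.pi / |ξ| with hM
    have hMpos : 0 < M := by positivity
    set a : ℕ → ℂ := fun j => Complex.exp ((ξ * (j:ℝ) : ℝ) * Complex.I) with ha
    have hMbound : ∀ t, N < t → ‖∑ j ∈ Finset.Ioc N t, a j‖ ≤ M :=
      fun t _ => my_geom_bound ξ hξ0 hhi N t
    have hwanti : ∀ j, N + 1 ≤ j → w (j+1) ≤ w j := by
      intro j hj
      rw [hw]
      have h1 : (0:ℝ) < j := by
        have : 0 < j := by omega
        exact_mod_cast this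
      apply inv_anti₀ h1
      push_cast
      linarith
    have hkey := my_abel_key w a N M hwanti hMbound R hR1
    -- bound the full sum
    have hwNR : 0 ≤ w (N+R) := by rw [hw]; positivity
    have hwN1 : w (N+1) ≤ ((N:ℝ))⁻¹ := by
      rw [hw]
      apply inv_anti₀ hNpos
      push_cast; linarith
    have hfull : ‖∑ j ∈ Finset.Ioc N (N+R), (w j : ℂ) * a j‖ ≤ w (N+1) * M := by
      have h1 : ‖(w (N+R) : ℂ) * ∑ j ∈ Finset.Ioc N (N+R), a j‖ ≤ w (N+R) * M := by
        rw [norm_mul, Complex.norm_real, Real.norm_eq_abs, abs_of_nonneg hwNR]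
        exact mul_le_mul_of_nonneg_left (hMbound _ (by omega)) hwNR
      calc ‖∑ j ∈ Finset.Ioc N (N+R), (w j : ℂ) * a j‖
          ≤ ‖(∑ j ∈ Finset.Ioc N (N+R), (w j : ℂ) * a j)
              - (w (N+R) : ℂ) * ∑ j ∈ Finset.Ioc N (N+R), a j‖
            + ‖(w (N+R) : ℂ) * ∑ j ∈ Finset.Ioc N (N+R), a j‖ := by
            have htri := norm_add_le
              ((∑ j ∈ Finset.Ioc N (N+R), (w j : ℂ) * a j)
                - (w (N+R):ℂ) * ∑ j ∈ Finset.Ioc N (N+R), a j)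
              ((w (N+R):ℂ) * ∑ j ∈ Finset.Ioc N (N+R), a j)
            rw [sub_add_cancel] at htri
            exact htri
        _ ≤ (w (N+1) - w (N+R)) * M + w (N+R) * M := add_le_add hkey h1
        _ = w (N+1) * M := by ring
    rw [hphi ξ, div_le_iff₀ hSpos]
    -- now: abs num ≤ 1/2 * S
    have hnum_le : ‖∑ j ∈ Finset.Ioc N (N+R),
        ((w j : ℝ):ℂ) * Complex.exp ((ξ * (j:ℝ) : ℝ) * Complex.I)‖ ≤ ((N:ℝ))⁻¹ * M := by
      refine hfull.trans ?_
      exact mul_le_mul_of_nonneg_right hwN1 hMpos.le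
    have hπ4 : Real.pi ≤ 4 := by linarith [Real.pi_le_four]
    have hξR : 16 ≤ |ξ| * R := by
      rw [div_le_iff₀ hRpos] at hlo
      linarith
    have hNS : (R:ℝ) ≤ 2 * N * S := by
      have h1 : (R:ℝ) ≤ S * ((N:ℝ)+R) := by
        rw [div_le_iff₀ (by positivity)] at hS_lb
        linarith
      nlinarith [hSpos.le]
    have hgoal : ((N:ℝ))⁻¹ * M ≤ 1/2 * S := by
      rw [hM]
      rw [inv_mul_le_iff₀ hNpos, div_le_iff₀ hξa]
      -- π ≤ N * (1/2 S) * |ξ| ; since |ξ| N S ≥ |ξ| R /2 ≥ 8 ≥ 2π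
      nlinarith [hNS, hξR, hSpos.le, abs_nonneg ξ, hπ4, mul_le_mul_of_nonneg_left hNS (abs_nonneg ξ)]
    linarith [hnum_le.trans hgoal]
end
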